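/- arXiv:1309.4161 — 3 statements merged into one kernel-verified Lean document; each statement's English description precedes it below -/
import Mathlib

section
/- Suppose the underlying network G is a tree. Then for any node v ∈ V and any feasible elapsed time t ∈ 𝒯_v, there exists a most likely infection path X^t for (v,t) such that for every node u ∈ V for which the subtree T_u(v;G) is non-observable, node u is never infected in X^t, i.e., X(u,τ) ≠ infected for all τ ≤ t. -/
open scoped Classical

namespace SILimited

/-- The possible states of a node in the discrete-time SI model with limited observations:
susceptible, non-susceptible, infected (non-explicit), and explicit. -/
inductive NodeState : Type
  | susceptible : NodeState
  | nonsusceptible : NodeState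
  | infected : NodeState
  | explicitN : NodeState
  deriving DecidableEq

/-- A node state counts as infected if it is infected (non-explicit) or explicit. -/
def NodeState.IsInfected : NodeState → Prop
  | .infected => True
  | .explicitN => True
  | _ => False

variable {V : Type*}

/-- One-time-slot transition probability of a single node `u` with explicit probability `qu`,
infection probability `p`: a susceptible node stays susceptible w.p. `1 - p`, becomes infected
non-explicit w.p. `p * (1 - qu)`, becomes explicit w.p. `p * qu`; infected (resp. explicit)
nodes stay infected (resp. explicit), and non-susceptible nodes remain uninfected w.p. one. -/
def transProb (p qu : ℝ) : NodeState → NodeState → ℝ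
  | .susceptible, .susceptible => 1 - p
  | .susceptible, .infected => p * (1 - qu)
  | .susceptible, .explicitN => p * qu
  | .nonsusceptible, .nonsusceptible => 1
  | .nonsusceptible, .susceptible => 1
  | .infected, .infected => 1
  | .explicitN, .explicitN => 1
  | _, _ => 0

/-- Probability `P_v(X^t)` of an infection path `X` over elapsed time `t` given source `v`:
the product over nodes and time slots of the one-slot transition probabilities, together with
the factor for whether the source is explicit or not. -/
noncomputable def pathProb (p : ℝ) (q : V → ℝ) (v : V) (t : ℕ) (X : V → ℕ → NodeState) : ℝ :=
  (if X v 0 = .explicitN then q v else 1 - q v) *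
    ∏ᶠ u : V, ∏ τ ∈ Finset.range t, transProb p (q u) (X u τ) (X u (τ + 1))

/-- `X` is a valid infection path over times `0, 1, …, t` for the SI dynamics on `G`
with (single) infection source `v`. -/
structure IsInfectionPath (G : SimpleGraph V) (v : V) (t : ℕ) (X : V → ℕ → NodeState) : Prop where
  source_infected : (X v 0).IsInfected
  init_uninfected : ∀ u, u ≠ v → ¬ (X u 0).IsInfected
  susceptible_iff : ∀ u, ∀ τ ≤ t, ¬ (X u τ).IsInfected →
    (X u τ = .susceptible ↔ ∃ w, G.Adj u w ∧ (X w τ).IsInfected)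
  infected_stays : ∀ u, ∀ τ, τ < t → X u τ = .infected → X u (τ + 1) = .infected
  explicit_stays : ∀ u, ∀ τ, τ < t → X u τ = .explicitN → X u (τ + 1) = .explicitN
  infect_from_susceptible : ∀ u, ∀ τ, τ < t → (X u (τ + 1)).IsInfected →
    (X u τ).IsInfected ∨ X u τ = .susceptible

/-- An infection path `X^t` is consistent with the observed explicit set `Ve` if the nodes
explicit at time `t` are exactly those of `Ve`. -/
def ConsistentWith (Ve : Set V) (t : ℕ) (X : V → ℕ → NodeState) : Prop :=
  ∀ u, X u t = .explicitN ↔ u ∈ Ve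

/-- The set `𝒳_v` of infection paths with source `v` and elapsed time `t` consistent with `Ve`. -/
def pathsFor (G : SimpleGraph V) (Ve : Set V) (v : V) (t : ℕ) : Set (V → ℕ → NodeState) :=
  {X | IsInfectionPath G v t X ∧ ConsistentWith Ve t X}

/-- The set `𝒯_v` of feasible elapsed times for source `v`. -/
def feasibleTimes (G : SimpleGraph V) (Ve : Set V) (v : V) : Set ℕ :=
  {t | (pathsFor G Ve v t).Nonempty}

/-- `X` is a most likely infection path for `(v, t)`: it is a consistent infection path and
maximizes `P_v` over `𝒳_v` at elapsed time `t`. -/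
def IsMostLikely (G : SimpleGraph V) (p : ℝ) (q : V → ℝ) (Ve : Set V) (v : V) (t : ℕ)
    (X : V → ℕ → NodeState) : Prop :=
  X ∈ pathsFor G Ve v t ∧ ∀ Y ∈ pathsFor G Ve v t, pathProb p q v t Y ≤ pathProb p q v t X

/-- `d̄(v, A) = max_{u ∈ A} d(v, u)`. -/
noncomputable def dbar (G : SimpleGraph V) (v : V) (A : Set V) : ℕ :=
  sSup (G.dist v '' A)

/-- Vertex set of the subtree `T_u(v;G)` rooted at `u` with the first edge of the path from
`u` to `v` removed: in a tree these are the vertices `w` whose path from `v` passes through `u`. -/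
def subtreeAway (G : SimpleGraph V) (u v : V) : Set V :=
  {w | G.dist v w = G.dist v u + G.dist u w}

/-- Vertex set of the minimal connected subtree of the tree `G` spanning `S`: the vertices
lying on a path between two vertices of `S`. -/
def spanVerts (G : SimpleGraph V) (S : Set V) : Set V :=
  {w | ∃ a ∈ S, ∃ b ∈ S, G.dist a b = G.dist a w + G.dist w b}

/-- The first infection time of node `u` in the infection path `X`. -/
noncomputable def firstInfection (X : V → ℕ → NodeState) (u : V) : ℕ :=
  sInf {τ | (X u τ).IsInfected}

/-- The latest infection path for `(v, t)`: a consistent infection path in which every node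
outside the minimal connected subtree `H` spanning `Ve ∪ {v}` remains uninfected for all
`τ ≤ t`, and every `u ∈ H \ {v}` first becomes infected at time `t - d̄(u, T_u(v;H))`. -/
def IsLatestPath (G : SimpleGraph V) (Ve : Set V) (v : V) (t : ℕ)
    (X : V → ℕ → NodeState) : Prop :=
  IsInfectionPath G v t X ∧ ConsistentWith Ve t X ∧
  (∀ u, u ∉ spanVerts G (Ve ∪ {v}) → ∀ τ ≤ t, ¬ (X u τ).IsInfected) ∧
  (∀ u ∈ spanVerts G (Ve ∪ {v}), u ≠ v →
    firstInfection X u = t - dbar G u (subtreeAway G u v ∩ spanVerts G (Ve ∪ {v})))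



end SILimited

open SILimited


namespace SILimited

section TreeAux
variable {V : Type*} {G : SimpleGraph V}

lemma tree_path_length (hT : G.IsTree) {a b : V} (p : G.Walk a b) (hp : p.IsPath) :
    p.length = G.dist a b := by
  obtain ⟨q, hq⟩ := hT.isConnected.exists_walk_length_eq_dist a b
  have hqp : q.IsPath := q.isPath_of_length_eq_dist hq
  have h := hT.IsAcyclic.path_unique ⟨p, hp⟩ ⟨q, hqp⟩
  have : p = q := congrArg Subtype.val h
  rw [this, hq]

lemma bet_of_mem_support (hT : G.IsTree) {r c u : V} (p : G.Walk r c) (hp : p.IsPath)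
    (hu : u ∈ p.support) : G.dist r c = G.dist r u + G.dist u c := by
  have h1 := tree_path_length hT (p.takeUntil u hu) (hp.takeUntil hu)
  have h2 := tree_path_length hT (p.dropUntil u hu) (hp.dropUntil hu)
  have h3 := congrArg SimpleGraph.Walk.length (p.take_spec hu)
  rw [SimpleGraph.Walk.length_append] at h3
  have h4 := tree_path_length hT p hp
  omega

lemma exists_path_concat {a b c : V} (p : G.Walk a b) (hp : p.IsPath)
    (h : G.Adj b c) (hc : c ∉ p.support) :
    ∃ r : G.Walk a c, r.IsPath ∧ r.length = p.length + 1 ∧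
      (∀ x, x ∈ r.support ↔ x ∈ p.support ∨ x = c) := by
  refine ⟨(SimpleGraph.Walk.cons h.symm p.reverse).reverse, ?_, ?_, ?_⟩
  · refine SimpleGraph.Walk.IsPath.reverse ?_
    refine (hp.reverse).cons ?_
    rwa [SimpleGraph.Walk.support_reverse, List.mem_reverse]
  · simp
  · intro x
    rw [SimpleGraph.Walk.support_reverse, List.mem_reverse, SimpleGraph.Walk.support_cons,
      List.mem_cons, SimpleGraph.Walk.support_reverse, List.mem_reverse]
    tauto

lemma mem_support_of_bet (hT : G.IsTree) {r c u : V}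
    (h : G.dist r c = G.dist r u + G.dist u c) (p : G.Walk r c) (hp : p.IsPath) :
    u ∈ p.support := by
  obtain ⟨p1, hp1, hl1⟩ := hT.isConnected.exists_path_of_dist r u
  obtain ⟨p2, hp2, hl2⟩ := hT.isConnected.exists_path_of_dist u c
  have hw : (p1.append p2).length = G.dist r c := by
    rw [SimpleGraph.Walk.length_append, hl1, hl2, h]
  have hwp : (p1.append p2).IsPath := (p1.append p2).isPath_of_length_eq_dist hw
  have hu : u ∈ (p1.append p2).support := by
    rw [SimpleGraph.Walk.mem_support_append_iff]
    exact Or.inl (p1.end_mem_support)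
  have heq := hT.IsAcyclic.path_unique ⟨p, hp⟩ ⟨p1.append p2, hwp⟩
  have : p = p1.append p2 := congrArg Subtype.val heq
  rw [this]; exact hu

lemma adj_dist_cases (hT : G.IsTree) {v a b : V} (h : G.Adj a b) :
    G.dist v b = G.dist v a + 1 ∨ G.dist v a = G.dist v b + 1 := by
  obtain ⟨p, hp, hl⟩ := hT.isConnected.exists_path_of_dist v a
  by_cases hb : b ∈ p.support
  · right
    have := bet_of_mem_support hT p hp hb
    have hba : G.dist b a = 1 := SimpleGraph.dist_eq_one_iff_adj.mpr h.symm
    omega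
  · left
    obtain ⟨r, hrp, hrl, _⟩ := exists_path_concat p hp h hb
    have := tree_path_length hT r hrp
    omega


lemma support_of_length_one {a b : V} (B : G.Walk a b) (h : B.length = 1) :
    B.support = [a, b] := by
  cases B with
  | nil => simp at h
  | cons hadj B' =>
    have h0 : B'.length = 0 := by simpa using h
    have hs : B'.support.length = 1 := by
      rw [SimpleGraph.Walk.length_support, h0]
    rw [SimpleGraph.Walk.support_cons]
    have hb := B'.end_mem_support
    obtain ⟨y, hy⟩ := List.length_eq_one_iff.mp hs
    rw [hy] at hb
    simp at hb
    subst hb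
    rw [hy]

/-- a neighbor `z` of `d` that is not a "child" (w.r.t. root `v`) is the parent:
it lies on every path from `v` to `d` and is strictly closer to `v`. -/
lemma parent_char (hT : G.IsTree) {v d z : V} (h : G.Adj d z)
    (hz : G.dist v z ≠ G.dist v d + 1) {p : G.Walk v d} (hp : p.IsPath) :
    G.dist v d = G.dist v z + 1 ∧ z ∈ p.support := by
  obtain ⟨p1, hp1, hl1⟩ := hT.isConnected.exists_path_of_dist v z
  by_cases hd : d ∈ p1.support
  · exfalso
    have := bet_of_mem_support hT p1 hp1 hd
    have : G.dist d z = 1 := SimpleGraph.dist_eq_one_iff_adj.mpr h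
    omega
  · obtain ⟨r, hrp, hrl, hrs⟩ := exists_path_concat p1 hp1 h.symm hd
    have hlen := tree_path_length hT r hrp
    have hdist : G.dist v d = G.dist v z + 1 := by omega
    have heq := hT.IsAcyclic.path_unique ⟨p, hp⟩ ⟨r, hrp⟩
    have hpr : p = r := congrArg Subtype.val heq
    refine ⟨hdist, ?_⟩
    rw [hpr, hrs]
    exact Or.inl p1.end_mem_support

/-- uniqueness of the parent -/
lemma parent_unique (hT : G.IsTree) {v d z1 z2 : V} (h1 : G.Adj d z1) (h2 : G.Adj d z2)
    (hz1 : G.dist v z1 ≠ G.dist v d + 1) (hz2 : G.dist v z2 ≠ G.dist v d + 1) :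
    z1 = z2 := by
  obtain ⟨p, hp, hl⟩ := hT.isConnected.exists_path_of_dist v d
  obtain ⟨hd1, hs1⟩ := parent_char hT h1 hz1 hp
  obtain ⟨hd2, hs2⟩ := parent_char hT h2 hz2 hp
  -- z1 on p; split p at z1
  have hbet := bet_of_mem_support hT p hp hs1
  have hz1d : G.dist z1 d = 1 := by omega
  have hdrop := tree_path_length hT (p.dropUntil z1 hs1) (hp.dropUntil hs1)
  rw [hz1d] at hdrop
  have hmem := p.take_spec hs1
  have : z2 ∈ (p.takeUntil z1 hs1).support ∨ z2 ∈ (p.dropUntil z1 hs1).support := by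
    rw [← SimpleGraph.Walk.mem_support_append_iff, hmem]; exact hs2
  rcases this with hmem2 | hmem2
  · have hbet2 := bet_of_mem_support hT (p.takeUntil z1 hs1) (hp.takeUntil hs1) hmem2
    have htl := tree_path_length hT (p.takeUntil z1 hs1) (hp.takeUntil hs1)
    have : G.dist z2 z1 = 0 := by omega
    have := (hT.isConnected.dist_eq_zero_iff).mp this
    exact this.symm
  · have hsup := support_of_length_one (p.dropUntil z1 hs1) hdrop
    rw [hsup] at hmem2
    simp at hmem2
    rcases hmem2 with rfl | rfl
    · rfl
    · exact absurd rfl h2.ne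

/-- if `c` is in the subtree away from `v` rooted at `u` and `c ≠ u`, then all neighbors of `c`
are in that subtree. -/
lemma subtree_closed (hT : G.IsTree) {u v c z : V}
    (hc : G.dist v c = G.dist v u + G.dist u c) (hcu : c ≠ u) (hzc : G.Adj c z) :
    G.dist v z = G.dist v u + G.dist u z := by
  by_cases hzu : z = u
  · subst hzu; simp
  · obtain ⟨p, hp, hl⟩ := hT.isConnected.exists_path_of_dist v z
    by_cases hu : u ∈ p.support
    · exact bet_of_mem_support hT p hp hu
    · exfalso
      -- u is on the path v→c; obtain path v→c through p
      have hcz : c ≠ z := hzc.ne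
      have hucpos : 1 ≤ G.dist u c := by
        have := hT.isConnected.pos_dist_of_ne (Ne.symm hcu)
        omega
      by_cases hcp : c ∈ p.support
      · -- c on path v→z; u on path v→c = takeUntil
        have hbetc := bet_of_mem_support hT p hp hcp
        have humem : u ∈ (p.takeUntil c hcp).support :=
          mem_support_of_bet hT hc (p.takeUntil c hcp) (hp.takeUntil hcp)
        -- but u ∉ p.support, while takeUntil support ⊆ p.support
        exact hu (SimpleGraph.Walk.support_takeUntil_subset p hcp humem)
      · -- c ∉ path v→z: extend p by edge z→c to get path v→c; u on it
        obtain ⟨r, hrp, hrl, hrs⟩ := exists_path_concat p hp hzc.symm hcp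
        have humem : u ∈ r.support := mem_support_of_bet hT hc r hrp
        rcases (hrs u).mp humem with h | h
        · exact hu h
        · exact hcu h.symm

/-- every vertex with at least 2 neighbors has a neighbor strictly further from `v` -/
lemma child_exists (hT : G.IsTree) (hloc : ∀ x : V, (G.neighborSet x).Finite)
    (hdeg : ∀ x : V, 2 ≤ (G.neighborSet x).ncard) (v d : V) :
    ∃ c, G.Adj d c ∧ G.dist v c = G.dist v d + 1 := by
  by_contra hcon
  push_neg at hcon
  have hsub : ∀ z1 ∈ G.neighborSet d, ∀ z2 ∈ G.neighborSet d, z1 = z2 := by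
    intro z1 hz1 z2 hz2
    exact parent_unique hT hz1 hz2 (hcon z1 hz1) (hcon z2 hz2)
  have h2 := hdeg d
  obtain ⟨a, b, ha, hb, hab⟩ := (Set.one_lt_ncard_iff (hloc d)).mp (by omega)
  exact hab (hsub a ha b hb)


instance : Fintype NodeState :=
  ⟨{.susceptible, .nonsusceptible, .infected, .explicitN}, fun x => by cases x <;> simp⟩

lemma isInfected_iff (s : NodeState) : s.IsInfected ↔ s = .infected ∨ s = .explicitN := by
  cases s <;> simp [NodeState.IsInfected]

lemma ball_finite (hc : G.Connected) (hloc : ∀ x : V, (G.neighborSet x).Finite) (v : V) :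
    ∀ n : ℕ, {w | G.dist v w ≤ n}.Finite := by
  intro n
  induction n with
  | zero =>
    refine Set.Finite.subset (Set.finite_singleton v) ?_
    intro w hw
    simp only [Set.mem_setOf_eq, Nat.le_zero] at hw
    have := (hc.dist_eq_zero_iff).mp hw
    simp [this]
  | succ n ih =>
    refine Set.Finite.subset (ih.union (Set.Finite.biUnion ih (fun x _ => hloc x))) ?_
    intro w hw
    simp only [Set.mem_setOf_eq] at hw
    by_cases h : G.dist v w ≤ n
    · exact Or.inl h
    · have hdist : G.dist v w = n + 1 := by omega
      have hwv : w ≠ v := by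
        intro he; rw [he, SimpleGraph.dist_self] at hdist; omega
      obtain ⟨p, hp⟩ := (hc v w).exists_walk_length_eq_dist
      obtain ⟨x, hadj, r, hr⟩ := SimpleGraph.Walk.exists_eq_cons_of_ne hwv p.reverse
      right
      refine Set.mem_biUnion (x := x) ?_ hadj.symm
      have hrlen : r.length = n := by
        have := congrArg SimpleGraph.Walk.length hr
        rw [SimpleGraph.Walk.length_reverse, SimpleGraph.Walk.length_cons] at this
        omega
      have := SimpleGraph.dist_le r.reverse
      simp only [SimpleGraph.Walk.length_reverse, hrlen] at this
      exact this

lemma bet_trans (hT : G.IsTree) {r w x z : V} (hx : G.dist r w = G.dist r x + G.dist x w)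
    (hz : G.dist r w = G.dist r z + G.dist z w) (hle : G.dist r x ≤ G.dist r z) :
    G.dist r z = G.dist r x + G.dist x z := by
  obtain ⟨P, hP, hPl⟩ := hT.isConnected.exists_path_of_dist r w
  have hzS : z ∈ P.support := mem_support_of_bet hT hz P hP
  have hxS : x ∈ P.support := mem_support_of_bet hT hx P hP
  have hsplit : x ∈ (P.takeUntil z hzS).support ∨ x ∈ (P.dropUntil z hzS).support := by
    rw [← SimpleGraph.Walk.mem_support_append_iff, P.take_spec hzS]; exact hxS
  rcases hsplit with h | h
  · exact bet_of_mem_support hT _ (hP.takeUntil hzS) h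
  · have hbet2 := bet_of_mem_support hT _ (hP.dropUntil hzS) h
    have tri : G.dist r x ≤ G.dist r z + G.dist z x := hT.isConnected.dist_triangle
    have hxz0 : G.dist z x = 0 := by omega
    have hzx : z = x := (hT.isConnected.dist_eq_zero_iff).mp hxz0
    subst hzx
    simp [SimpleGraph.dist_self]


end TreeAux

section ProbAux
variable {p qu : ℝ}

lemma transProb_nonneg (hp0 : 0 ≤ p) (hp1 : p ≤ 1) (hq0 : 0 ≤ qu) (hq1 : qu ≤ 1)
    (s s' : NodeState) : 0 ≤ transProb p qu s s' := by
  cases s <;> cases s' <;> simp [transProb] <;> nlinarith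

lemma transProb_le_one (hp0 : 0 ≤ p) (hp1 : p ≤ 1) (hq0 : 0 ≤ qu) (hq1 : qu ≤ 1)
    (s s' : NodeState) : transProb p qu s s' ≤ 1 := by
  cases s <;> cases s' <;> simp [transProb] <;> nlinarith

lemma transProb_ne_one {s s' : NodeState} (h : transProb p qu s s' ≠ 1) :
    s = .susceptible ∨ s.IsInfected ∨ s'.IsInfected := by
  cases s <;> cases s' <;> simp_all [transProb, NodeState.IsInfected]

end ProbAux

section PathAux
variable {V : Type*} {G : SimpleGraph V} {Ve : Set V} {v : V} {t : ℕ} {X : V → ℕ → NodeState}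

lemma stays_infected_st (hX : IsInfectionPath G v t X) {w : V} {τ τ' : ℕ}
    (h : τ ≤ τ') (h' : τ' ≤ t) (hs : X w τ = .infected) : X w τ' = .infected := by
  induction τ', h using Nat.le_induction with
  | base => exact hs
  | succ n hn ih => exact hX.infected_stays w n (by omega) (ih (by omega))

lemma stays_explicit_st (hX : IsInfectionPath G v t X) {w : V} {τ τ' : ℕ}
    (h : τ ≤ τ') (h' : τ' ≤ t) (hs : X w τ = .explicitN) : X w τ' = .explicitN := by
  induction τ', h using Nat.le_induction with
  | base => exact hs
  | succ n hn ih => exact hX.explicit_stays w n (by omega) (ih (by omega))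

lemma infected_mono (hX : IsInfectionPath G v t X) {w : V} {τ τ' : ℕ}
    (h : τ ≤ τ') (h' : τ' ≤ t) (hi : (X w τ).IsInfected) : (X w τ').IsInfected := by
  rcases (isInfected_iff _).mp hi with hs | hs
  · rw [stays_infected_st hX h h' hs]; trivial
  · rw [stays_explicit_st hX h h' hs]; trivial

lemma not_explicit_of_not_mem (hX : IsInfectionPath G v t X) (hC : ConsistentWith Ve t X)
    {w : V} (hw : w ∉ Ve) {τ : ℕ} (hτ : τ ≤ t) : X w τ ≠ .explicitN := by
  intro h
  exact hw ((hC w).mp (stays_explicit_st hX hτ le_rfl h))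

lemma infected_dist (hT : G.IsTree) (hX : IsInfectionPath G v t X) :
    ∀ τ, τ ≤ t → ∀ w, (X w τ).IsInfected → G.dist v w ≤ τ := by
  intro τ
  induction τ with
  | zero =>
    intro _ w hw
    by_cases h : w = v
    · subst h; simp
    · exact absurd hw (hX.init_uninfected w h)
  | succ n ih =>
    intro hn w hw
    rcases hX.infect_from_susceptible w n (by omega) hw with h | h
    · have := ih (by omega) w h; omega
    · obtain ⟨z, hadj, hz⟩ := (hX.susceptible_iff w n (by omega) (by rw [h]; simp [NodeState.IsInfected])).mp h
      have h1 := ih (by omega) z hz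
      have h2 := hT.isConnected.dist_triangle (u := v) (v := z) (w := w)
      have h3 : G.dist z w = 1 := SimpleGraph.dist_eq_one_iff_adj.mpr hadj.symm
      omega

lemma infected_bet (hT : G.IsTree) (hX : IsInfectionPath G v t X) :
    ∀ τ, τ ≤ t → ∀ w, (X w τ).IsInfected → ∀ x, G.dist v w = G.dist v x + G.dist x w →
      (X x τ).IsInfected := by
  intro τ
  induction τ with
  | zero =>
    intro _ w hw x hx
    have hwv : w = v := by
      by_contra h
      exact (hX.init_uninfected w h) hw
    have h0 : G.dist v w = 0 := by rw [hwv]; exact (hT.isConnected.dist_eq_zero_iff).mpr rfl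
    have hx0 : G.dist v x = 0 := by omega
    have hvx : v = x := (hT.isConnected.dist_eq_zero_iff).mp hx0
    rw [← hvx]
    exact hX.source_infected
  | succ n ih =>
    intro hn w hw x hx
    by_cases hxw : x = w
    · subst hxw; exact hw
    rcases hX.infect_from_susceptible w n (by omega) hw with h | h
    · exact infected_mono hX (Nat.le_succ n) hn (ih (by omega) w h x hx)
    · obtain ⟨z, hadj, hz⟩ := (hX.susceptible_iff w n (by omega) (by rw [h]; simp [NodeState.IsInfected])).mp h
      rcases adj_dist_cases hT (v := v) hadj.symm with hc | hc
      · -- dist v w = dist v z + 1 : x is between v and z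
        have hzw : G.dist z w = 1 := SimpleGraph.dist_eq_one_iff_adj.mpr hadj.symm
        have hbetzw : G.dist v w = G.dist v z + G.dist z w := by omega
        have hxw1 : 1 ≤ G.dist x w := hT.isConnected.pos_dist_of_ne hxw
        have hle : G.dist v x ≤ G.dist v z := by omega
        have hbet : G.dist v z = G.dist v x + G.dist x z := bet_trans hT hx hbetzw hle
        exact infected_mono hX (Nat.le_succ n) hn (ih (by omega) z hz x hbet)
      · -- dist v z = dist v w + 1 : w is between v and z, so w was already infected; contradiction
        exfalso
        have hwz : G.dist w z = 1 := SimpleGraph.dist_eq_one_iff_adj.mpr hadj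
        have hbet : G.dist v z = G.dist v w + G.dist w z := by omega
        have := ih (by omega) z hz w hbet
        rw [h] at this
        simp [NodeState.IsInfected] at this

lemma exists_first_infection (hX : IsInfectionPath G v t X) {u : V} {τ1 : ℕ}
    (hu : u ≠ v) (hτ1 : τ1 ≤ t) (hi : (X u τ1).IsInfected) :
    ∃ τ0, 1 ≤ τ0 ∧ τ0 ≤ τ1 ∧ (X u τ0).IsInfected ∧ (∀ σ, σ < τ0 → ¬ (X u σ).IsInfected) ∧
      X u (τ0 - 1) = .susceptible := by
  have hex : ∃ τ, (X u τ).IsInfected := ⟨τ1, hi⟩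
  set τ0 := Nat.find hex with hτ0
  have hspec : (X u τ0).IsInfected := Nat.find_spec hex
  have hmin : ∀ σ, σ < τ0 → ¬ (X u σ).IsInfected := fun σ hσ => Nat.find_min hex hσ
  have h1 : 1 ≤ τ0 := by
    rcases Nat.eq_zero_or_pos τ0 with h | h
    · exact absurd (h ▸ hspec) (hX.init_uninfected u hu)
    · omega
  have hle : τ0 ≤ τ1 := Nat.find_le hi
  refine ⟨τ0, h1, hle, hspec, hmin, ?_⟩
  have he : τ0 - 1 + 1 = τ0 := by omega
  have := hX.infect_from_susceptible u (τ0 - 1) (by omega) (by rw [he]; exact hspec)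
  rcases this with h | h
  · exact absurd h (hmin _ (by omega))
  · exact h

end PathAux

section Surgery
variable {V : Type*} {G : SimpleGraph V} {Ve : Set V} {v : V} {t : ℕ} {X : V → ℕ → NodeState}

/-- The modified path: kill all infections in the subtree away from `v` rooted at `u`. -/
noncomputable def modPath (G : SimpleGraph V) (v u : V) (τ0 : ℕ) (X : V → ℕ → NodeState) :
    V → ℕ → NodeState :=
  fun w τ => if w = u then (if τ < τ0 then X w τ else .susceptible)
    else if G.dist v w = G.dist v u + G.dist u w then .nonsusceptible else X w τ

lemma modPath_u_lt {u : V} {τ0 τ : ℕ} (h : τ < τ0) : modPath G v u τ0 X u τ = X u τ := by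
  simp [modPath, h]

lemma modPath_u_ge {u : V} {τ0 τ : ℕ} (h : τ0 ≤ τ) : modPath G v u τ0 X u τ = .susceptible := by
  simp [modPath, Nat.not_lt.mpr h]

lemma modPath_inD {u w : V} {τ0 τ : ℕ} (hw : w ≠ u)
    (hD : G.dist v w = G.dist v u + G.dist u w) :
    modPath G v u τ0 X w τ = .nonsusceptible := by
  simp [modPath, hw, hD]

lemma modPath_out {u w : V} {τ0 τ : ℕ} (hw : w ≠ u)
    (hD : ¬ G.dist v w = G.dist v u + G.dist u w) :
    modPath G v u τ0 X w τ = X w τ := by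
  simp [modPath, hw, hD]

/-- Main surgery lemma: structural part. -/
lemma surgery_structure (hT : G.IsTree)
    (hX : X ∈ pathsFor G Ve v t) {u : V}
    (hD : subtreeAway G u v ∩ Ve = ∅) (hVene : Ve.Nonempty)
    {τ1 : ℕ} (hτ1 : τ1 ≤ t) (hinf : (X u τ1).IsInfected) :
    ∃ τ0, 1 ≤ τ0 ∧ τ0 ≤ τ1 ∧ (X u τ0).IsInfected ∧ (∀ σ, σ < τ0 → ¬ (X u σ).IsInfected) ∧
      X u (τ0 - 1) = .susceptible ∧
      modPath G v u τ0 X ∈ pathsFor G Ve v t ∧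
      (∀ w τ, (modPath G v u τ0 X w τ).IsInfected → (X w τ).IsInfected) ∧
      (∀ w τ, G.dist v w = G.dist v u + G.dist u w → ¬ (modPath G v u τ0 X w τ).IsInfected) := by
  obtain ⟨hXp, hXc⟩ := hX
  have huD : G.dist v u = G.dist v u + G.dist u u := by simp
  have hmemD : ∀ w, w ∈ subtreeAway G u v ↔ G.dist v w = G.dist v u + G.dist u w := by
    intro w; rfl
  have hnotVe : ∀ w, G.dist v w = G.dist v u + G.dist u w → w ∉ Ve := by
    intro w hw hwVe
    exact Set.eq_empty_iff_forall_notMem.mp hD w ⟨(hmemD w).mpr hw, hwVe⟩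
  have huVe : u ∉ Ve := hnotVe u huD
  have hunev : u ≠ v := by
    intro h
    obtain ⟨e, he⟩ := hVene
    apply hnotVe e _ he
    subst h
    simp [SimpleGraph.dist_self]
  -- first infection time
  obtain ⟨τ0, hτ01, hτ0le, hτ0inf, hτ0min, hτ0sus⟩ :=
    exists_first_infection hXp hunev hτ1 hinf
  have hτ0t : τ0 ≤ t := le_trans hτ0le hτ1
  -- D nodes uninfected before τ0
  have hDbet : ∀ w, G.dist v w = G.dist v u + G.dist u w → ∀ σ, σ ≤ t →
      (X w σ).IsInfected → (X u σ).IsInfected := by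
    intro w hw σ hσ hwσ
    exact infected_bet hT hXp σ hσ w hwσ u hw
  have hDnotinf : ∀ w, G.dist v w = G.dist v u + G.dist u w → ∀ σ, σ < τ0 → σ ≤ t →
      ¬ (X w σ).IsInfected := by
    intro w hw σ hσ hσt hcon
    exact hτ0min σ hσ (hDbet w hw σ hσt hcon)
  -- the parent w1
  have hτ0m1 : τ0 - 1 ≤ t := by omega
  obtain ⟨w1, hw1adj, hw1inf⟩ :=
    (hXp.susceptible_iff u (τ0 - 1) hτ0m1 (by rw [hτ0sus]; simp [NodeState.IsInfected])).mp hτ0sus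
  have hw1D : ¬ G.dist v w1 = G.dist v u + G.dist u w1 := by
    intro h
    exact hDnotinf w1 h (τ0 - 1) (by omega) hτ0m1 hw1inf
  have hw1inf' : ∀ σ, τ0 - 1 ≤ σ → σ ≤ t → (X w1 σ).IsInfected := by
    intro σ h1 h2
    exact infected_mono hXp h1 h2 hw1inf
  -- neighbors of D \ {u} are in D
  have hNbr : ∀ c, G.dist v c = G.dist v u + G.dist u c → c ≠ u → ∀ z, G.Adj c z →
      G.dist v z = G.dist v u + G.dist u z := by
    intro c hc hcu z hz
    exact subtree_closed hT hc hcu hz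
  -- parent uniqueness
  have hw1uniq : ∀ z, G.Adj u z → ¬ G.dist v z = G.dist v u + G.dist u z → z = w1 := by
    intro z hz hzD
    have hbad : ∀ y, G.Adj u y → ¬ G.dist v y = G.dist v u + G.dist u y →
        G.dist v y ≠ G.dist v u + 1 := by
      intro y hy hyD hcon
      apply hyD
      rw [hcon, SimpleGraph.dist_eq_one_iff_adj.mpr hy]
    exact parent_unique hT hz hw1adj (hbad z hz hzD) (hbad w1 hw1adj hw1D)
  have hvD : ¬ G.dist v v = G.dist v u + G.dist u v := by
    rw [SimpleGraph.dist_self]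
    intro h
    have : G.dist v u = 0 := by omega
    exact hunev ((hT.isConnected.dist_eq_zero_iff).mp this).symm
  -- basic facts about modPath G v u τ0 X
  have hYout : ∀ w, w ≠ u → ¬ G.dist v w = G.dist v u + G.dist u w → ∀ τ, modPath G v u τ0 X w τ = X w τ := by
    intro w h1 h2 τ; exact modPath_out h1 h2
  have hYv : ∀ τ, modPath G v u τ0 X v τ = X v τ := fun τ => hYout v (Ne.symm hunev) hvD τ
  have hYDni : ∀ w, G.dist v w = G.dist v u + G.dist u w → ∀ τ, ¬ (modPath G v u τ0 X w τ).IsInfected := by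
    intro w hw τ
    by_cases h : w = u
    · subst h
      by_cases hτ : τ < τ0
      · rw [modPath_u_lt hτ]; exact hτ0min τ hτ
      · rw [modPath_u_ge (by omega)]; simp [NodeState.IsInfected]
    · rw [modPath_inD h hw]; simp [NodeState.IsInfected]
  have hYinf : ∀ w τ, (modPath G v u τ0 X w τ).IsInfected → (X w τ).IsInfected ∧ modPath G v u τ0 X w τ = X w τ := by
    intro w τ h
    by_cases hw : G.dist v w = G.dist v u + G.dist u w
    · exact absurd h (hYDni w hw τ)
    · have : w ≠ u := by intro he; subst he; exact hw huD
      rw [hYout w this hw τ] at h ⊢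
      exact ⟨h, rfl⟩
  refine ⟨τ0, hτ01, hτ0le, hτ0inf, hτ0min, hτ0sus, ⟨?_, ?_⟩, fun w τ h => (hYinf w τ h).1,
    fun w τ hw => hYDni w hw τ⟩
  · -- IsInfectionPath
    constructor
    · rw [hYv]; exact hXp.source_infected
    · intro w hw
      by_cases h : w = u
      · replace h := h.symm; subst h; rw [modPath_u_lt (by omega)]; exact hXp.init_uninfected u hw
      · by_cases h2 : G.dist v w = G.dist v u + G.dist u w
        · rw [modPath_inD h h2]; simp [NodeState.IsInfected]
        · rw [hYout w h h2]; exact hXp.init_uninfected w hw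
    · -- susceptible_iff
      intro w τ hτ hni
      by_cases h : w = u
      · replace h := h.symm; subst h
        by_cases hτ0' : τ < τ0
        · rw [modPath_u_lt hτ0'] at hni ⊢
          have hXiff := hXp.susceptible_iff u τ hτ hni
          constructor
          · intro hs
            obtain ⟨z, hadj, hzi⟩ := hXiff.mp hs
            have hzD : ¬ G.dist v z = G.dist v u + G.dist u z := by
              intro hc
              exact hτ0min τ hτ0' (hDbet z hc τ hτ hzi)
            refine ⟨z, hadj, ?_⟩
            have : z ≠ u := by intro he; subst he; exact hzD huD
            rw [hYout z this hzD]; exact hzi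
          · rintro ⟨z, hadj, hzi⟩
            obtain ⟨hzX, _⟩ := hYinf z τ hzi
            exact hXiff.mpr ⟨z, hadj, hzX⟩
        · rw [modPath_u_ge (by omega)]
          constructor
          · intro _
            refine ⟨w1, hw1adj, ?_⟩
            rw [hYout w1 ?_ hw1D]
            · exact hw1inf' τ (by omega) hτ
            · intro he; subst he; exact hw1D huD
          · intro _; rfl
      · by_cases h2 : G.dist v w = G.dist v u + G.dist u w
        · rw [modPath_inD h h2]
          constructor
          · intro hcon; exact absurd hcon (by simp)
          · rintro ⟨z, hadj, hzi⟩
            exact absurd hzi (hYDni z (hNbr w h2 h z hadj) τ)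
        · rw [hYout w h h2] at hni ⊢
          have hXiff := hXp.susceptible_iff w τ hτ hni
          constructor
          · intro hs
            obtain ⟨z, hadj, hzi⟩ := hXiff.mp hs
            by_cases hzD : G.dist v z = G.dist v u + G.dist u z
            · -- z in D infected; then z = u and w = w1, but w1 is infected, contradiction
              exfalso
              have hzu : z = u := by
                by_contra hzu
                exact h2 (hNbr z hzD hzu w hadj.symm)
              subst hzu
              have hut : τ0 ≤ τ := by
                by_contra hcon
                exact hτ0min τ (by omega) hzi
              have hww1 : w = w1 := hw1uniq w hadj.symm h2
              subst hww1
              have := hw1inf' τ (by omega) hτ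
              rw [hs] at this
              simp [NodeState.IsInfected] at this
            · refine ⟨z, hadj, ?_⟩
              have : z ≠ u := by intro he; subst he; exact hzD huD
              rw [hYout z this hzD]; exact hzi
          · rintro ⟨z, hadj, hzi⟩
            obtain ⟨hzX, _⟩ := hYinf z τ hzi
            exact hXiff.mpr ⟨z, hadj, hzX⟩
    · -- infected_stays
      intro w τ hτ hw
      by_cases h : w = u
      · replace h := h.symm; subst h
        exfalso
        by_cases hτ0' : τ < τ0
        · rw [modPath_u_lt hτ0'] at hw
          exact hτ0min τ hτ0' (by rw [hw]; simp [NodeState.IsInfected])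
        · rw [modPath_u_ge (by omega)] at hw
          simp at hw
      · by_cases h2 : G.dist v w = G.dist v u + G.dist u w
        · rw [modPath_inD h h2] at hw; simp at hw
        · rw [hYout w h h2] at hw ⊢
          exact hXp.infected_stays w τ hτ hw
    · -- explicit_stays
      intro w τ hτ hw
      by_cases h : w = u
      · replace h := h.symm; subst h
        exfalso
        by_cases hτ0' : τ < τ0
        · rw [modPath_u_lt hτ0'] at hw
          exact hτ0min τ hτ0' (by rw [hw]; simp [NodeState.IsInfected])
        · rw [modPath_u_ge (by omega)] at hw
          simp at hw
      · by_cases h2 : G.dist v w = G.dist v u + G.dist u w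
        · rw [modPath_inD h h2] at hw; simp at hw
        · rw [hYout w h h2] at hw ⊢
          exact hXp.explicit_stays w τ hτ hw
    · -- infect_from_susceptible
      intro w τ hτ hw
      obtain ⟨hwX, _⟩ := hYinf w (τ + 1) hw
      by_cases h2 : G.dist v w = G.dist v u + G.dist u w
      · exact absurd hw (hYDni w h2 (τ + 1))
      · have h : w ≠ u := by intro he; subst he; exact h2 huD
        rw [hYout w h h2]
        exact hXp.infect_from_susceptible w τ hτ hwX
  · -- ConsistentWith
    intro w
    by_cases h : w = u
    · subst h
      rw [modPath_u_ge hτ0t]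
      constructor
      · intro hcon; exact absurd hcon (by simp)
      · intro hcon; exact absurd hcon huVe
    · by_cases h2 : G.dist v w = G.dist v u + G.dist u w
      · rw [modPath_inD h h2]
        constructor
        · intro hcon; exact absurd hcon (by simp)
        · intro hcon; exact absurd hcon (hnotVe w h2)
      · rw [hYout w h h2]
        exact hXc w

end Surgery

section ProbCompare
variable {V : Type*} {G : SimpleGraph V} {Ve : Set V} {v : V} {t : ℕ} {X : V → ℕ → NodeState}
variable {p : ℝ} {q : V → ℝ}

lemma mulSupport_subset_K (hXp : IsInfectionPath G v t X) :
    Function.mulSupport (fun w => ∏ τ ∈ Finset.range t, transProb p (q w) (X w τ) (X w (τ+1)))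
      ⊆ {w | ∃ τ ≤ t, (X w τ).IsInfected} ∪
        ⋃ z ∈ {w | ∃ τ ≤ t, (X w τ).IsInfected}, G.neighborSet z := by
  intro w hw
  simp only [Function.mem_mulSupport] at hw
  have hex : ∃ τ ∈ Finset.range t, transProb p (q w) (X w τ) (X w (τ+1)) ≠ 1 := by
    by_contra hcon
    push_neg at hcon
    exact hw (Finset.prod_eq_one hcon)
  obtain ⟨τ, hτ, hne⟩ := hex
  have hτt : τ < t := Finset.mem_range.mp hτ
  rcases transProb_ne_one hne with hs | hi | hi
  · obtain ⟨z, hadj, hzi⟩ :=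
      (hXp.susceptible_iff w τ (by omega) (by rw [hs]; simp [NodeState.IsInfected])).mp hs
    right
    exact Set.mem_biUnion ⟨τ, by omega, hzi⟩ hadj.symm
  · exact Or.inl ⟨τ, by omega, hi⟩
  · exact Or.inl ⟨τ + 1, by omega, hi⟩

lemma IX_finite (hT : G.IsTree) (hloc : ∀ x : V, (G.neighborSet x).Finite)
    (hXp : IsInfectionPath G v t X) : {w | ∃ τ ≤ t, (X w τ).IsInfected}.Finite := by
  refine (ball_finite hT.isConnected hloc v t).subset ?_
  rintro w ⟨τ, hτ, hi⟩
  exact le_trans (infected_dist hT hXp τ hτ w hi) hτ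

lemma pathProb_eq_prod (p : ℝ) (q : V → ℝ) (v : V) (t : ℕ) (X : V → ℕ → NodeState) (K : Finset V)
    (hK : Function.mulSupport
      (fun w => ∏ τ ∈ Finset.range t, transProb p (q w) (X w τ) (X w (τ+1))) ⊆ K) :
    pathProb p q v t X = (if X v 0 = .explicitN then q v else 1 - q v) *
      ∏ w ∈ K, ∏ τ ∈ Finset.range t, transProb p (q w) (X w τ) (X w (τ+1)) := by
  unfold pathProb
  rw [finprod_eq_prod_of_mulSupport_subset _ hK]

lemma surgery_prob (hT : G.IsTree) (hloc : ∀ x : V, (G.neighborSet x).Finite)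
    (hdeg : ∀ x : V, 2 ≤ (G.neighborSet x).ncard)
    (hp0 : 0 < p) (hp1 : p < 1)
    (hq0 : ∀ w, max 0 (2 - 1 / p) ≤ q w) (hq1 : ∀ w, q w ≤ 1)
    (hXp : IsInfectionPath G v t X) (hXc : ConsistentWith Ve t X) {u : V}
    (hnotVe : ∀ w, G.dist v w = G.dist v u + G.dist u w → w ∉ Ve)
    (hunev : u ≠ v) {τ0 : ℕ}
    (hτ01 : 1 ≤ τ0) (hτ0t : τ0 ≤ t) (hτ0inf : (X u τ0).IsInfected)
    (hτ0min : ∀ σ, σ < τ0 → ¬ (X u σ).IsInfected) (hτ0sus : X u (τ0 - 1) = .susceptible)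
    (hYp : IsInfectionPath G v t (modPath G v u τ0 X))
    (hYinfsub : ∀ w τ, τ ≤ t → (modPath G v u τ0 X w τ).IsInfected → (X w τ).IsInfected) :
    pathProb p q v t X ≤ pathProb p q v t (modPath G v u τ0 X) := by
  have hq0' : ∀ w, 0 ≤ q w := fun w => le_trans (le_max_left _ _) (hq0 w)
  have hq2 : ∀ w, 2 - 1 / p ≤ q w := fun w => le_trans (le_max_right _ _) (hq0 w)
  have hpq : ∀ w, p * (1 - q w) ≤ 1 - p := by
    intro w
    have h2 := hq2 w
    have hinv : p * (1 / p) = 1 := by field_simp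
    nlinarith
  have htp0 : ∀ w (s s' : NodeState), 0 ≤ transProb p (q w) s s' :=
    fun w => transProb_nonneg (le_of_lt hp0) (le_of_lt hp1) (hq0' w) (hq1 w)
  have htp1 : ∀ w (s s' : NodeState), transProb p (q w) s s' ≤ 1 :=
    fun w => transProb_le_one (le_of_lt hp0) (le_of_lt hp1) (hq0' w) (hq1 w)
  have huD : G.dist v u = G.dist v u + G.dist u u := by simp
  have huVe : u ∉ Ve := hnotVe u huD
  set Y := modPath G v u τ0 X with hYdef
  set IX := {w | ∃ τ ≤ t, (X w τ).IsInfected} with hIX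
  have hIXfin : IX.Finite := IX_finite hT hloc hXp
  set K := IX ∪ ⋃ z ∈ IX, G.neighborSet z with hK
  have hKfin : K.Finite := hIXfin.union (Set.Finite.biUnion hIXfin fun z _ => hloc z)
  set KF := hKfin.toFinset with hKF
  have hKmem : ∀ w, w ∈ KF ↔ w ∈ K := fun w => Set.Finite.mem_toFinset hKfin
  -- support bounds
  have hsX : Function.mulSupport
      (fun w => ∏ τ ∈ Finset.range t, transProb p (q w) (X w τ) (X w (τ+1))) ⊆ KF := by
    intro w hw
    rw [Finset.mem_coe, hKmem]
    exact mulSupport_subset_K hXp hw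
  have hsY : Function.mulSupport
      (fun w => ∏ τ ∈ Finset.range t, transProb p (q w) (Y w τ) (Y w (τ+1))) ⊆ KF := by
    intro w hw
    rw [Finset.mem_coe, hKmem]
    have h1 := mulSupport_subset_K (p := p) (q := q) hYp hw
    rcases h1 with h | h
    · obtain ⟨τ, hτ, hi⟩ := h
      exact Or.inl ⟨τ, hτ, hYinfsub w τ hτ hi⟩
    · simp only [Set.mem_iUnion, exists_prop] at h
      obtain ⟨z, ⟨τ, hτ, hi⟩, hzw⟩ := h
      right
      exact Set.mem_biUnion ⟨τ, hτ, hYinfsub z τ hτ hi⟩ hzw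
  -- leading factor
  have hY0 : Y v 0 = X v 0 := by
    refine modPath_out (Ne.symm hunev) ?_
    rw [SimpleGraph.dist_self]
    intro h
    have h0 : G.dist v u = 0 := by omega
    exact hunev ((hT.isConnected.dist_eq_zero_iff).mp h0).symm
  have hcv : 0 ≤ (if X v 0 = NodeState.explicitN then q v else 1 - q v) := by
    split
    · exact hq0' v
    · linarith [hq1 v]
  rw [pathProb_eq_prod p q v t X KF hsX, pathProb_eq_prod p q v t Y KF hsY, hY0]
  refine mul_le_mul_of_nonneg_left ?_ hcv
  -- split into D and non-D parts
  set FX := fun w => ∏ τ ∈ Finset.range t, transProb p (q w) (X w τ) (X w (τ+1)) with hFX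
  set FY := fun w => ∏ τ ∈ Finset.range t, transProb p (q w) (Y w τ) (Y w (τ+1)) with hFY
  have hFX0 : ∀ w, 0 ≤ FX w := fun w => Finset.prod_nonneg fun τ _ => htp0 w _ _
  have hFX1 : ∀ w, FX w ≤ 1 := fun w =>
    Finset.prod_le_one (fun τ _ => htp0 w _ _) (fun τ _ => htp1 w _ _)
  set DP := fun w => G.dist v w = G.dist v u + G.dist u w with hDP
  rw [← Finset.prod_filter_mul_prod_filter_not KF DP FX,
    ← Finset.prod_filter_mul_prod_filter_not KF DP FY]
  have houtside : ∀ w ∈ KF.filter (fun w => ¬ DP w), FY w = FX w := by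
    intro w hw
    obtain ⟨hw1, hw2⟩ := Finset.mem_filter.mp hw
    have hwu : w ≠ u := by
      intro he; subst he; exact hw2 huD
    apply Finset.prod_congr rfl
    intro τ _
    rw [hYdef, modPath_out hwu hw2, modPath_out hwu hw2]
  rw [Finset.prod_congr rfl houtside]
  have hrest0 : 0 ≤ ∏ w ∈ KF.filter (fun w => ¬ DP w), FX w :=
    Finset.prod_nonneg fun w _ => hFX0 w
  refine mul_le_mul_of_nonneg_right ?_ hrest0
  -- now compare products over D
  have huKF : u ∈ KF.filter DP := 
    Finset.mem_filter.mpr ⟨(hKmem u).mpr (Or.inl ⟨τ0, hτ0t, hτ0inf⟩), huD⟩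
  -- Y restricted to D: only u contributes
  have hYD : ∏ w ∈ KF.filter DP, FY w = FY u := by
    refine Finset.prod_eq_single u ?_ (fun h => absurd huKF h)
    intro w hw hwu
    obtain ⟨_, hw2⟩ := Finset.mem_filter.mp hw
    apply Finset.prod_eq_one
    intro τ _
    rw [hYdef, modPath_inD hwu hw2, modPath_inD hwu hw2]
    rfl
  rw [hYD]
  rw [← Finset.mul_prod_erase _ FX huKF]
  -- decompose FX u and FY u
  have hτe : τ0 - 1 + 1 = τ0 := by omega
  have hXuτ0 : X u τ0 = NodeState.infected := by
    rcases (isInfected_iff _).mp hτ0inf with h | h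
    · exact h
    · exact absurd h (not_explicit_of_not_mem hXp hXc huVe hτ0t)
  set A := ∏ τ ∈ Finset.range (τ0 - 1), transProb p (q u) (X u τ) (X u (τ+1)) with hA
  have hA0 : 0 ≤ A := Finset.prod_nonneg fun τ _ => htp0 u _ _
  have hsplitu : ∀ (Z : V → ℕ → NodeState),
      (∏ τ ∈ Finset.range t, transProb p (q u) (Z u τ) (Z u (τ+1))) =
      (∏ τ ∈ Finset.range (τ0-1), transProb p (q u) (Z u τ) (Z u (τ+1))) *
      (transProb p (q u) (Z u (τ0-1)) (Z u τ0) *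
        ∏ τ ∈ Finset.Ico τ0 t, transProb p (q u) (Z u τ) (Z u (τ+1))) := by
    intro Z
    rw [← Finset.prod_range_mul_prod_Ico _ (show τ0 - 1 ≤ t by omega),
      Finset.prod_eq_prod_Ico_succ_bot (show τ0 - 1 < t by omega), hτe]
  have hFXu : FX u = A * (p * (1 - q u)) := by
    rw [hFX]
    simp only []
    rw [hsplitu X, hτ0sus, hXuτ0]
    have hIco1 : ∀ τ ∈ Finset.Ico τ0 t, transProb p (q u) (X u τ) (X u (τ+1)) = 1 := by
      intro τ hτ
      obtain ⟨h1, h2⟩ := Finset.mem_Ico.mp hτ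
      rw [stays_infected_st hXp h1 (by omega) hXuτ0,
        stays_infected_st hXp (show τ0 ≤ τ + 1 by omega) (by omega) hXuτ0]
      rfl
    rw [Finset.prod_eq_one hIco1, ← hA]
    simp [transProb]
  have hFYu : FY u = A * ((1 - p) * (1 - p) ^ (t - τ0)) := by
    rw [hFY]
    simp only []
    rw [hsplitu Y]
    have he1 : ∀ τ ∈ Finset.range (τ0 - 1),
        transProb p (q u) (Y u τ) (Y u (τ+1)) = transProb p (q u) (X u τ) (X u (τ+1)) := by
      intro τ hτ
      have hτ' := Finset.mem_range.mp hτ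
      rw [hYdef, modPath_u_lt (by omega), modPath_u_lt (by omega)]
    rw [Finset.prod_congr rfl he1, ← hA]
    have he2 : Y u (τ0 - 1) = NodeState.susceptible := by
      rw [hYdef, modPath_u_lt (by omega), hτ0sus]
    have he3 : Y u τ0 = NodeState.susceptible := by
      rw [hYdef, modPath_u_ge le_rfl]
    have he4 : ∀ τ ∈ Finset.Ico τ0 t, transProb p (q u) (Y u τ) (Y u (τ+1)) = 1 - p := by
      intro τ hτ
      obtain ⟨h1, h2⟩ := Finset.mem_Ico.mp hτ
      rw [hYdef, modPath_u_ge h1, modPath_u_ge (by omega)]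
      rfl
    rw [Finset.prod_congr rfl he4, he2, he3, Finset.prod_const, Nat.card_Ico]
    rfl
  -- witness chain
  set E := (KF.filter DP).erase u with hE
  have hrest0' : 0 ≤ ∏ w ∈ E, FX w := Finset.prod_nonneg fun w _ => hFX0 w
  have hwit : ∀ σ, ∃ c, τ0 ≤ σ → σ < t → (c ∈ E ∧ X c σ = NodeState.susceptible ∧
      transProb p (q c) (X c σ) (X c (σ+1)) ≤ 1 - p) := by
    intro σ
    by_cases hσ : τ0 ≤ σ ∧ σ < t
    · obtain ⟨h1, h2⟩ := hσ
      set Iσ := {d | DP d ∧ (X d σ).IsInfected} with hIσ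
      have hfin : Iσ.Finite := hIXfin.subset (fun d hd => ⟨σ, by omega, hd.2⟩)
      have hne : Iσ.Nonempty := ⟨u, show DP u by simp only [hDP]; exact huD,
        infected_mono hXp h1 (by omega) hτ0inf⟩
      obtain ⟨d, hd, hdmax⟩ := Set.Finite.exists_maximalFor (G.dist v) Iσ hfin hne
      obtain ⟨c, hcadj, hcd⟩ := child_exists hT hloc hdeg v d
      have hdD : G.dist v d = G.dist v u + G.dist u d := by
        have := hd.1; simp only [hDP] at this; exact this
      have hcD' : G.dist v c = G.dist v u + G.dist u c := by
        by_cases hdu : d = u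
        · replace hdu := hdu.symm; subst hdu
          have h3 : G.dist u c = 1 := SimpleGraph.dist_eq_one_iff_adj.mpr hcadj
          omega
        · exact subtree_closed hT hdD hdu hcadj
      have hcD : DP c := by simp only [hDP]; exact hcD'
      have hcu : c ≠ u := by
        intro he; subst he
        omega
      have hcnotinf : ¬ (X c σ).IsInfected := by
        intro hcon
        have := hdmax ⟨hcD, hcon⟩ (by omega)
        omega
      have hcsus : X c σ = NodeState.susceptible :=
        (hXp.susceptible_iff c σ (by omega) hcnotinf).mpr ⟨d, hcadj.symm, hd.2⟩
      have hcE : c ∈ E := by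
        rw [hE, Finset.mem_erase]
        refine ⟨hcu, Finset.mem_filter.mpr ⟨(hKmem c).mpr (Or.inr ?_), hcD⟩⟩
        exact Set.mem_biUnion (show d ∈ IX from ⟨σ, by omega, hd.2⟩) hcadj
      have hcne : X c (σ+1) ≠ NodeState.explicitN :=
        not_explicit_of_not_mem hXp hXc (hnotVe c hcD') (by omega)
      refine ⟨c, fun _ _ => ⟨hcE, hcsus, ?_⟩⟩
      rw [hcsus]
      cases hcs : X c (σ+1) with
      | susceptible => simp [transProb]
      | nonsusceptible => simp only [transProb]; linarith
      | infected => simpa [transProb] using hpq c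
      | explicitN => exact absurd hcs hcne
    · exact ⟨u, fun ha hb => absurd ⟨ha, hb⟩ hσ⟩
  choose cf hcf using hwit
  set f := fun σ => transProb p (q (cf σ)) (X (cf σ) σ) (X (cf σ) (σ+1)) with hf
  have hmap : ∀ σ ∈ Finset.Ico τ0 t, cf σ ∈ E := by
    intro σ hσ
    obtain ⟨h1, h2⟩ := Finset.mem_Ico.mp hσ
    exact (hcf σ h1 h2).1
  have hfib := Finset.prod_fiberwise_of_maps_to hmap f
  have hperw : ∀ w ∈ E, FX w ≤ ∏ σ ∈ (Finset.Ico τ0 t).filter (fun σ => cf σ = w), f σ := by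
    intro w hw
    have hsub : (Finset.Ico τ0 t).filter (fun σ => cf σ = w) ⊆ Finset.range t := by
      intro σ hσ
      rw [Finset.mem_range]
      exact (Finset.mem_Ico.mp (Finset.mem_filter.mp hσ).1).2
    have heqf : ∏ σ ∈ (Finset.Ico τ0 t).filter (fun σ => cf σ = w), f σ =
        ∏ σ ∈ (Finset.Ico τ0 t).filter (fun σ => cf σ = w),
          transProb p (q w) (X w σ) (X w (σ+1)) := by
      refine Finset.prod_congr rfl fun σ hσ => ?_
      rw [hf]
      simp only []
      rw [(Finset.mem_filter.mp hσ).2]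
    rw [heqf]
    have hFXw : FX w = ∏ τ ∈ Finset.range t, transProb p (q w) (X w τ) (X w (τ+1)) := rfl
    rw [hFXw, ← Finset.prod_sdiff hsub (f := fun σ => transProb p (q w) (X w σ) (X w (σ+1)))]
    refine mul_le_of_le_one_left (Finset.prod_nonneg fun σ _ => htp0 w _ _) ?_
    exact Finset.prod_le_one (fun σ _ => htp0 w _ _) (fun σ _ => htp1 w _ _)
  have hchain : ∏ w ∈ E, FX w ≤ (1-p)^(t - τ0) := by
    calc ∏ w ∈ E, FX w
        ≤ ∏ w ∈ E, ∏ σ ∈ (Finset.Ico τ0 t).filter (fun σ => cf σ = w), f σ :=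
          Finset.prod_le_prod (fun w _ => hFX0 w) hperw
      _ = ∏ σ ∈ Finset.Ico τ0 t, f σ := hfib
      _ ≤ ∏ σ ∈ Finset.Ico τ0 t, (1-p) := by
          refine Finset.prod_le_prod (fun σ _ => htp0 _ _ _) (fun σ hσ => ?_)
          obtain ⟨h1, h2⟩ := Finset.mem_Ico.mp hσ
          exact (hcf σ h1 h2).2.2
      _ = (1-p)^(t-τ0) := by rw [Finset.prod_const, Nat.card_Ico]
  rw [hFXu, hFYu]
  have h1p0 : (0:ℝ) ≤ 1 - p := by linarith
  calc A * (p * (1 - q u)) * ∏ w ∈ E, FX w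
      ≤ A * (1 - p) * ((1-p)^(t-τ0)) := by
        exact mul_le_mul (mul_le_mul_of_nonneg_left (hpq u) hA0) hchain hrest0'
          (mul_nonneg hA0 h1p0)
    _ = A * ((1 - p) * (1-p)^(t-τ0)) := by ring

end ProbCompare

section MaxExists
variable {V : Type*} {G : SimpleGraph V} {Ve : Set V} {v : V} {t : ℕ}
variable {p : ℝ} {q : V → ℝ}

lemma mulSupport_ball (hT : G.IsTree) {X : V → ℕ → NodeState}
    (hXp : IsInfectionPath G v t X) :
    Function.mulSupport (fun w => ∏ τ ∈ Finset.range t, transProb p (q w) (X w τ) (X w (τ+1)))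
      ⊆ {w | G.dist v w ≤ t + 1} := by
  intro w hw
  rcases mulSupport_subset_K hXp hw with h | h
  · obtain ⟨τ, hτ, hi⟩ := h
    have := infected_dist hT hXp τ hτ w hi
    simp only [Set.mem_setOf_eq]
    omega
  · simp only [Set.mem_iUnion, exists_prop] at h
    obtain ⟨z, ⟨τ, hτ, hi⟩, hzw⟩ := h
    have h1 := infected_dist hT hXp τ hτ z hi
    have h2 := hT.isConnected.dist_triangle (u := v) (v := z) (w := w)
    have h3 : G.dist z w = 1 := SimpleGraph.dist_eq_one_iff_adj.mpr hzw
    simp only [Set.mem_setOf_eq]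
    omega

lemma exists_max_path (hT : G.IsTree) (hloc : ∀ x : V, (G.neighborSet x).Finite)
    (p : ℝ) (q : V → ℝ) (hs : (pathsFor G Ve v t).Nonempty) :
    ∃ X ∈ pathsFor G Ve v t, ∀ Y ∈ pathsFor G Ve v t,
      pathProb p q v t Y ≤ pathProb p q v t X := by
  have hBfin : {w | G.dist v w ≤ t + 1}.Finite := ball_finite hT.isConnected hloc v (t+1)
  set R : (V → ℕ → NodeState) → (V → ℕ → NodeState) :=
    fun X w τ => if G.dist v w ≤ t + 1 ∧ τ ≤ t then X w τ else .nonsusceptible with hR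
  have hRprob : ∀ X ∈ pathsFor G Ve v t, pathProb p q v t (R X) = pathProb p q v t X := by
    intro X hX
    obtain ⟨hXp, _⟩ := hX
    unfold pathProb
    have h0 : R X v 0 = X v 0 := by
      rw [hR]
      simp only []
      rw [if_pos ⟨by simp [SimpleGraph.dist_self], Nat.zero_le t⟩]
    rw [h0]
    congr 1
    apply finprod_congr
    intro w
    by_cases hw : G.dist v w ≤ t + 1
    · refine Finset.prod_congr rfl fun τ hτ => ?_
      have hτt := Finset.mem_range.mp hτ
      rw [hR]
      simp only []
      rw [if_pos ⟨hw, by omega⟩, if_pos ⟨hw, by omega⟩]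
    · have h1 : ∏ τ ∈ Finset.range t, transProb p (q w) (R X w τ) (R X w (τ+1)) = 1 := by
        refine Finset.prod_eq_one fun τ hτ => ?_
        rw [hR]
        simp only []
        rw [if_neg (by tauto), if_neg (by tauto)]
        rfl
      rw [h1]
      by_contra hne
      have hmem : w ∈ Function.mulSupport
          (fun w => ∏ τ ∈ Finset.range t, transProb p (q w) (X w τ) (X w (τ+1))) := by
        intro hcon
        exact hne hcon.symm
      exact hw (mulSupport_ball hT hXp hmem)
  have hrange : (Set.range R).Finite := by
    have hfin : Finite ((↥hBfin.toFinset) → Fin (t+2) → NodeState) := by infer_instance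
    refine Set.Finite.of_finite_image
      (f := fun (Y : V → ℕ → NodeState) =>
        (fun (w : ↥hBfin.toFinset) (τ : Fin (t+2)) => Y w τ)) (Set.toFinite _) ?_
    rintro Y1 ⟨X1, rfl⟩ Y2 ⟨X2, rfl⟩ heq
    funext w τ
    by_cases hcond : G.dist v w ≤ t + 1 ∧ τ ≤ t
    · have hwB : w ∈ hBfin.toFinset := by
        rw [Set.Finite.mem_toFinset]; exact hcond.1
      have h := congrFun (congrFun heq ⟨w, hwB⟩) ⟨τ, by omega⟩
      exact h
    · rw [hR]
      simp only []
      rw [if_neg hcond, if_neg hcond]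
  have himg : ((pathProb p q v t) '' (pathsFor G Ve v t)).Finite := by
    refine ((hrange.image (pathProb p q v t)).subset ?_)
    rintro y ⟨X, hX, rfl⟩
    exact ⟨R X, ⟨X, rfl⟩, hRprob X hX⟩
  obtain ⟨X, hX, hmax⟩ :=
    Set.Finite.exists_maximalFor' (pathProb p q v t) _ himg hs
  refine ⟨X, hX, fun Y hY => ?_⟩
  rcases le_total (pathProb p q v t Y) (pathProb p q v t X) with h | h
  · exact h
  · exact hmax hY h

end MaxExists

end SILimited

/-- If `G` is a tree, then for any node `v` and any feasible elapsed time
`t ∈ 𝒯_v`, there exists a most likely infection path `X^t` for `(v,t)` such that every node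
`u` whose subtree `T_u(v;G)` is non-observable (contains no explicit node) is never infected
in `X^t`. -/
theorem most_likely_path_avoids_nonobservable_subtrees
    {V : Type*} [Infinite V] (G : SimpleGraph V) (hT : G.IsTree)
    (hloc : ∀ u : V, (G.neighborSet u).Finite)
    (hdeg : ∀ u : V, 2 ≤ (G.neighborSet u).ncard)
    (p : ℝ) (hp0 : 0 < p) (hp1 : p < 1)
    (q : V → ℝ) (hq0 : ∀ u, max 0 (2 - 1 / p) ≤ q u) (hq1 : ∀ u, q u ≤ 1)
    (Ve : Set V) (hVene : Ve.Nonempty) (hVefin : Ve.Finite)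
    (v : V) (t : ℕ) (ht : t ∈ feasibleTimes G Ve v) :
    ∃ X, IsMostLikely G p q Ve v t X ∧
      ∀ u : V, subtreeAway G u v ∩ Ve = ∅ → ∀ τ ≤ t, ¬ (X u τ).IsInfected := by
  obtain ⟨X0, hX0⟩ := ht
  obtain ⟨Xm, hXm, hXmax⟩ := exists_max_path hT hloc p q ⟨X0, hX0⟩
  set M := {X | X ∈ pathsFor G Ve v t ∧ ∀ Y ∈ pathsFor G Ve v t,
    pathProb p q v t Y ≤ pathProb p q v t X} with hM
  have hMne : M.Nonempty := ⟨Xm, hXm, hXmax⟩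
  set NN : (V → ℕ → NodeState) → ℕ :=
    fun X => ∑ τ ∈ Finset.range (t+1), {w | (X w τ).IsInfected}.ncard with hNN
  have himg : (NN '' M).Nonempty := hMne.image NN
  obtain ⟨X, hXM, hXn⟩ := Nat.sInf_mem himg
  refine ⟨X, ⟨hXM.1, hXM.2⟩, ?_⟩
  intro u hDe τ1 hτ1 hcon
  obtain ⟨hXp, hXc⟩ := hXM.1
  obtain ⟨τ0, hτ01, hτ0le, hτ0inf, hτ0min, hτ0sus, hYpaths, hYsub, hYD⟩ :=
    surgery_structure hT ⟨hXp, hXc⟩ hDe hVene hτ1 hcon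
  have hτ0t : τ0 ≤ t := le_trans hτ0le hτ1
  have hnotVe : ∀ w, G.dist v w = G.dist v u + G.dist u w → w ∉ Ve := by
    intro w hw hwVe
    exact Set.eq_empty_iff_forall_notMem.mp hDe w ⟨hw, hwVe⟩
  have huD : G.dist v u = G.dist v u + G.dist u u := by simp
  have hunev : u ≠ v := by
    intro h
    obtain ⟨e, he⟩ := hVene
    apply hnotVe e _ he
    subst h
    simp [SimpleGraph.dist_self]
  have hprob := surgery_prob hT hloc hdeg hp0 hp1 hq0 hq1 hXp hXc hnotVe hunev hτ01 hτ0t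
    hτ0inf hτ0min hτ0sus hYpaths.1 (fun w τ _ h => hYsub w τ h)
  have hYM : modPath G v u τ0 X ∈ M := by
    refine ⟨hYpaths, fun Z hZ => ?_⟩
    exact le_trans (hXM.2 Z hZ) hprob
  have hfinX : ∀ τ, τ ≤ t → {w | (X w τ).IsInfected}.Finite := fun τ hτ =>
    (IX_finite hT hloc hXp).subset (fun w hw => ⟨τ, hτ, hw⟩)
  have hle : ∀ τ ∈ Finset.range (t+1),
      {w | (modPath G v u τ0 X w τ).IsInfected}.ncard ≤ {w | (X w τ).IsInfected}.ncard := by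
    intro τ hτ
    have hτt : τ ≤ t := by have := Finset.mem_range.mp hτ; omega
    exact Set.ncard_le_ncard (fun w hw => hYsub w τ hw) (hfinX τ hτt)
  have hlt : {w | (modPath G v u τ0 X w τ0).IsInfected}.ncard <
      {w | (X w τ0).IsInfected}.ncard := by
    refine Set.ncard_lt_ncard ?_ (hfinX τ0 hτ0t)
    rw [Set.ssubset_iff_subset_ne]
    refine ⟨fun w hw => hYsub w τ0 hw, ?_⟩
    intro he
    have hmem : u ∈ {w | (modPath G v u τ0 X w τ0).IsInfected} := by
      rw [he]
      exact hτ0inf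
    exact hYD u τ0 huD hmem
  have hNlt : NN (modPath G v u τ0 X) < NN X := by
    rw [hNN]
    simp only []
    exact Finset.sum_lt_sum hle ⟨τ0, Finset.mem_range.mpr (by omega), hlt⟩
  have h1 : sInf (NN '' M) ≤ NN (modPath G v u τ0 X) := Nat.sInf_le ⟨_, hYM, rfl⟩
  omega
end

section
/- Suppose the underlying network G is a tree. Then for any node v ∈ V and any feasible elapsed time t ∈ 𝒯_v, the latest infection path for (v,t) is a most likely infection path for (v,t), i.e., it maximizes P_v over all infection paths consistent with V_e at elapsed time t. -/
open scoped Classical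

namespace SIAux

variable {V : Type*} {G : SimpleGraph V} {v u w x : V}

lemma exists_parent (hc : G.Connected) (h : u ≠ v) :
    ∃ w, G.Adj u w ∧ G.dist v w + 1 = G.dist v u := by
  obtain ⟨p, hp⟩ := hc.exists_walk_length_eq_dist u v
  cases p with
  | nil => exact absurd rfl h
  | cons hadj q =>
    rename_i w'
    refine ⟨w', hadj, ?_⟩
    have h1 : G.dist v w' ≤ q.length := by
      rw [SimpleGraph.dist_comm]; exact SimpleGraph.dist_le q
    have h2 : G.dist v u ≤ G.dist v w' + 1 := by
      have : G.dist w' u = 1 := SimpleGraph.dist_eq_one_iff_adj.2 hadj.symm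
      calc G.dist v u ≤ G.dist v w' + G.dist w' u := hc.dist_triangle
        _ = G.dist v w' + 1 := by rw [this]
    have h3 : q.length + 1 = G.dist v u := by
      simpa [SimpleGraph.dist_comm] using hp
    omega

lemma adj_dist_ne (hT : G.IsTree) (h : G.Adj u x) : G.dist v u ≠ G.dist v x := by
  intro heq
  have hc := hT.isConnected
  obtain ⟨P, hPp, hPl⟩ := hc.exists_path_of_dist v u
  by_cases hx : x ∈ P.support
  · -- dropUntil is the unique path x → u, must be the single edge
    have hsplit := P.take_spec hx
    have hlen : (P.takeUntil x hx).length + (P.dropUntil x hx).length = P.length := by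
      conv_rhs => rw [← hsplit]
      rw [SimpleGraph.Walk.length_append]
    have hd1 : (P.dropUntil x hx).IsPath := hPp.dropUntil hx
    have huniq := hT.existsUnique_path x u
    have hedge : (SimpleGraph.Walk.cons h.symm SimpleGraph.Walk.nil : G.Walk x u).IsPath := by
      simp [h.ne']
    have : P.dropUntil x hx = SimpleGraph.Walk.cons h.symm SimpleGraph.Walk.nil :=
      (huniq.unique hd1 hedge)
    have hdl : (P.dropUntil x hx).length = 1 := by rw [this]; simp
    have htk : G.dist v x ≤ (P.takeUntil x hx).length := SimpleGraph.dist_le _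
    have hne0 : G.dist v u ≠ 0 := by
      intro h0
      have hvu : v = u := (hc.dist_eq_zero_iff).1 h0
      have hx0 : G.dist v x = 0 := heq ▸ h0
      have hvx : v = x := (hc.dist_eq_zero_iff).1 hx0
      exact h.ne (hvu.symm.trans hvx)
    omega
  · have hQ : (P.concat h).IsPath := by
      rw [← SimpleGraph.Walk.isPath_reverse_iff, SimpleGraph.Walk.reverse_concat,
        SimpleGraph.Walk.cons_isPath_iff]
      exact ⟨hPp.reverse, by simpa [SimpleGraph.Walk.support_reverse] using hx⟩
    obtain ⟨R, hRp, hRl⟩ := hc.exists_path_of_dist v x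
    have := (hT.existsUnique_path v x).unique hQ hRp
    have : (P.concat h).length = R.length := by rw [this]
    rw [SimpleGraph.Walk.length_concat, hPl, hRl] at this
    omega

end SIAux

namespace SIAux2
open SimpleGraph
variable {V : Type*} {G : SimpleGraph V} {v u w x a b : V}
open SIAux

lemma parent_unique (hT : G.IsTree) (h1 : G.Adj u w) (hd1 : G.dist v w + 1 = G.dist v u)
    (h2 : G.Adj u x) (hd2 : G.dist v x + 1 = G.dist v u) : w = x := by
  have hc := hT.isConnected
  obtain ⟨P1, hP1p, hP1l⟩ := hc.exists_path_of_dist v w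
  obtain ⟨P2, hP2p, hP2l⟩ := hc.exists_path_of_dist v x
  have hQ1 : (P1.concat h1.symm).IsPath := by
    apply SimpleGraph.Walk.isPath_of_length_eq_dist
    rw [SimpleGraph.Walk.length_concat, hP1l, hd1]
  have hQ2 : (P2.concat h2.symm).IsPath := by
    apply SimpleGraph.Walk.isPath_of_length_eq_dist
    rw [SimpleGraph.Walk.length_concat, hP2l, hd2]
  obtain ⟨p0, _, hun⟩ := hT.existsUnique_path v u
  have e12 : P1.concat h1.symm = P2.concat h2.symm := by
    rw [hun _ hQ1, hun _ hQ2]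
  have hsup : (P1.concat h1.symm).reverse.support = (P2.concat h2.symm).reverse.support := by
    rw [e12]
  rw [SimpleGraph.Walk.reverse_concat, SimpleGraph.Walk.reverse_concat] at hsup
  simp only [SimpleGraph.Walk.support_cons] at hsup
  rw [SimpleGraph.Walk.support_eq_cons P1.reverse, SimpleGraph.Walk.support_eq_cons P2.reverse]
    at hsup
  simp only [List.cons.injEq] at hsup
  exact hsup.2.1

noncomputable def par (G : SimpleGraph V) (v u : V) : V :=
  if h : ∃ w, G.Adj u w ∧ G.dist v w + 1 = G.dist v u then h.choose else u

lemma par_spec (hc : G.Connected) (h : u ≠ v) :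
    G.Adj u (par G v u) ∧ G.dist v (par G v u) + 1 = G.dist v u := by
  have he := exists_parent hc h
  rw [par, dif_pos he]
  exact he.choose_spec

lemma par_eq (hT : G.IsTree) (hadj : G.Adj u w) (hd : G.dist v w + 1 = G.dist v u) :
    par G v u = w := by
  have h : ∃ w, G.Adj u w ∧ G.dist v w + 1 = G.dist v u := ⟨w, hadj, hd⟩
  rw [par, dif_pos h]
  exact parent_unique hT h.choose_spec.1 h.choose_spec.2 hadj hd

lemma dist_adj_le (hc : G.Connected) (h : G.Adj u x) : G.dist v x ≤ G.dist v u + 1 := by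
  have h1 : G.dist u x = 1 := SimpleGraph.dist_eq_one_iff_adj.2 h
  calc G.dist v x ≤ G.dist v u + G.dist u x := hc.dist_triangle
    _ = G.dist v u + 1 := by rw [h1]

lemma adj_classify (hT : G.IsTree) (hu : u ≠ v) (h : G.Adj u x) :
    x = par G v u ∨ G.dist v x = G.dist v u + 1 := by
  have hc := hT.isConnected
  have hne : G.dist v u ≠ G.dist v x := adj_dist_ne hT h
  have l1 : G.dist v x ≤ G.dist v u + 1 := dist_adj_le hc h
  have l2 : G.dist v u ≤ G.dist v x + 1 := dist_adj_le hc h.symm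
  rcases (by omega : G.dist v x + 1 = G.dist v u ∨ G.dist v x = G.dist v u + 1) with hd | hd
  · exact Or.inl (par_eq hT h hd).symm
  · exact Or.inr hd

lemma eq_par_of_dist (hT : G.IsTree) (hadj : G.Adj u x) (hd : G.dist v x = G.dist v u + 1) :
    par G v x = u :=
  par_eq hT hadj.symm (by omega)

lemma ball_finite (hc : G.Connected) (hloc : ∀ u : V, (G.neighborSet u).Finite) (v : V) :
    ∀ n, {u | G.dist v u ≤ n}.Finite := by
  intro n
  induction n with
  | zero =>
    refine Set.Finite.subset (Set.finite_singleton v) ?_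
    intro u hu
    simp only [Set.mem_setOf_eq, Nat.le_zero] at hu
    simp only [Set.mem_singleton_iff]
    exact ((hc.dist_eq_zero_iff).1 hu).symm
  | succ n ih =>
    have hsub : {u | G.dist v u ≤ n + 1} ⊆
        {u | G.dist v u ≤ n} ∪ ⋃ w ∈ {u | G.dist v u ≤ n}, G.neighborSet w := by
      intro u hu
      simp only [Set.mem_setOf_eq] at hu
      by_cases hle : G.dist v u ≤ n
      · exact Or.inl hle
      · have hne : u ≠ v := by
          intro h; subst h; simp [SimpleGraph.dist_self] at hle
        obtain ⟨w, hw, hd⟩ := exists_parent hc hne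
        refine Or.inr (Set.mem_biUnion (show w ∈ {u | G.dist v u ≤ n} from ?_) hw.symm)
        simp only [Set.mem_setOf_eq]
        omega
    exact Set.Finite.subset (ih.union (Set.Finite.biUnion ih fun w _ => hloc w)) hsub

lemma dist_add_of_mem_geodesic (hc : G.Connected) {R : G.Walk v a} (hl : R.length = G.dist v a)
    (hw : w ∈ R.support) : G.dist v a = G.dist v w + G.dist w a := by
  have hs := R.take_spec hw
  have hlen : (R.takeUntil w hw).length + (R.dropUntil w hw).length = R.length := by
    conv_rhs => rw [← hs]
    rw [SimpleGraph.Walk.length_append]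
  have h1 : G.dist v w ≤ (R.takeUntil w hw).length := SimpleGraph.dist_le _
  have h2 : G.dist w a ≤ (R.dropUntil w hw).length := SimpleGraph.dist_le _
  have h3 : G.dist v a ≤ G.dist v w + G.dist w a := hc.dist_triangle
  omega

lemma four_point (hT : G.IsTree) (hab : G.dist a b = G.dist a w + G.dist w b) :
    G.dist v a = G.dist v w + G.dist w a ∨ G.dist v b = G.dist v w + G.dist w b := by
  have hc := hT.isConnected
  obtain ⟨Qa, hQa⟩ := hc.exists_walk_length_eq_dist a w
  obtain ⟨Qb, hQb⟩ := hc.exists_walk_length_eq_dist w b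
  obtain ⟨Ra, hRa⟩ := hc.exists_walk_length_eq_dist v a
  obtain ⟨Rb, hRb⟩ := hc.exists_walk_length_eq_dist v b
  have hW : (Qa.append Qb).IsPath := by
    apply SimpleGraph.Walk.isPath_of_length_eq_dist
    rw [SimpleGraph.Walk.length_append, hQa, hQb, hab]
  obtain ⟨p0, _, hun⟩ := hT.existsUnique_path a b
  have hU := (Ra.reverse.append Rb).bypass_isPath
  have e : Qa.append Qb = (Ra.reverse.append Rb).bypass := by
    rw [hun _ hW, hun _ hU]
  have hwmem : w ∈ (Qa.append Qb).support :=
    SimpleGraph.Walk.subset_support_append_left _ _ Qa.end_mem_support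
  rw [e] at hwmem
  have hwmem2 : w ∈ (Ra.reverse.append Rb).support :=
    SimpleGraph.Walk.support_bypass_subset _ hwmem
  rw [SimpleGraph.Walk.mem_support_append_iff] at hwmem2
  rcases hwmem2 with hmem | hmem
  · left
    rw [SimpleGraph.Walk.support_reverse, List.mem_reverse] at hmem
    exact dist_add_of_mem_geodesic hc hRa hmem
  · right
    exact dist_add_of_mem_geodesic hc hRb hmem

lemma parent_step (hT : G.IsTree) (huw : u ≠ w)
    (hd : G.dist v w = G.dist v u + G.dist u w) :
    w ≠ v ∧ G.Adj w (par G v w) ∧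
      G.dist v (par G v w) = G.dist v u + G.dist u (par G v w) ∧
      G.dist u (par G v w) + 1 = G.dist u w := by
  have hc := hT.isConnected
  have hdwu : 0 < G.dist u w := hc.pos_dist_of_ne huw
  have hwv : w ≠ v := by
    intro h; subst h
    rw [SimpleGraph.dist_self] at hd
    omega
  obtain ⟨y, hy, hyd⟩ := exists_parent hc (v := u) huw.symm
  have hyp : y = par G v w := by
    rcases adj_classify hT hwv hy with h | h
    · exact h
    · exfalso
      have : G.dist v y ≤ G.dist v u + G.dist u y := hc.dist_triangle
      omega
  subst hyp
  refine ⟨hwv, hy, ?_, hyd⟩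
  obtain ⟨-, hps2⟩ := par_spec hc hwv
  have l1 : G.dist v (par G v w) ≤ G.dist v u + G.dist u (par G v w) := hc.dist_triangle
  omega

end SIAux2

namespace SIDyn
open SILimited SIAux SIAux2 SimpleGraph

variable {V : Type*} {G : SimpleGraph V} {v u w x : V} {t τ : ℕ} {X : V → ℕ → NodeState}

lemma isInf_iff (s : NodeState) : s.IsInfected ↔ s = .infected ∨ s = .explicitN := by
  cases s <;> simp [NodeState.IsInfected]

lemma not_isInf_iff (s : NodeState) :
    ¬ s.IsInfected ↔ s = .susceptible ∨ s = .nonsusceptible := by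
  cases s <;> simp [NodeState.IsInfected]

lemma infn_mono (hX : IsInfectionPath G v t X) {τ τ' : ℕ} (h : τ ≤ τ') (ht : τ' ≤ t)
    (hi : X u τ = .infected) : X u τ' = .infected := by
  induction τ' , h using Nat.le_induction with
  | base => exact hi
  | succ n hn ih =>
    exact hX.infected_stays u n (by omega) (ih (by omega))

lemma expl_mono (hX : IsInfectionPath G v t X) {τ τ' : ℕ} (h : τ ≤ τ') (ht : τ' ≤ t)
    (hi : X u τ = .explicitN) : X u τ' = .explicitN := by
  induction τ' , h using Nat.le_induction with
  | base => exact hi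
  | succ n hn ih =>
    exact hX.explicit_stays u n (by omega) (ih (by omega))

lemma inf_mono (hX : IsInfectionPath G v t X) {τ τ' : ℕ} (h : τ ≤ τ') (ht : τ' ≤ t)
    (hi : (X u τ).IsInfected) : (X u τ').IsInfected := by
  rcases (isInf_iff _).1 hi with h1 | h1
  · exact (isInf_iff _).2 (Or.inl (infn_mono hX h ht h1))
  · exact (isInf_iff _).2 (Or.inr (expl_mono hX h ht h1))

lemma inf_dist (hX : IsInfectionPath G v t X) (hc : G.Connected) :
    ∀ τ ≤ t, ∀ u, (X u τ).IsInfected → G.dist v u ≤ τ := by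
  intro τ
  induction τ with
  | zero =>
    intro _ u hu
    by_cases h : u = v
    · subst h; simp [SimpleGraph.dist_self]
    · exact absurd hu (hX.init_uninfected u h)
  | succ n ih =>
    intro hn u hu
    by_cases h : (X u n).IsInfected
    · have := ih (by omega) u h; omega
    · have hsusc : X u n = .susceptible := by
        rcases hX.infect_from_susceptible u n (by omega) hu with h' | h'
        · exact absurd h' h
        · exact h'
      obtain ⟨w, hadj, hwinf⟩ := (hX.susceptible_iff u n (by omega) h).1 hsusc
      have h1 := ih (by omega) w hwinf
      have h2 : G.dist v u ≤ G.dist v w + 1 := dist_adj_le hc hadj.symm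
      omega

lemma infected_parent (hX : IsInfectionPath G v t X) (hT : G.IsTree) :
    ∀ τ ≤ t, ∀ u, u ≠ v → (X u τ).IsInfected →
      1 ≤ τ ∧ (X (par G v u) (τ - 1)).IsInfected := by
  intro τ
  induction τ using Nat.strong_induction_on with
  | _ τ IH =>
    match τ with
    | 0 => intro _ u hu hinf; exact absurd hinf (hX.init_uninfected u hu)
    | τ0 + 1 =>
      intro ht u hu hinf
      by_cases h : (X u τ0).IsInfected
      · obtain ⟨h1, h2⟩ := IH τ0 (by omega) (by omega) u hu h
        refine ⟨by omega, ?_⟩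
        have := inf_mono hX (show τ0 - 1 ≤ τ0 by omega) (by omega) h2
        simpa using this
      · have hsusc : X u τ0 = .susceptible := by
          rcases hX.infect_from_susceptible u τ0 (by omega) hinf with h' | h'
          · exact absurd h' h
          · exact h'
        obtain ⟨y, hadj, hyinf⟩ := (hX.susceptible_iff u τ0 (by omega) h).1 hsusc
        rcases adj_classify hT hu hadj with hyp | hyd
        · subst hyp; exact ⟨by omega, by simpa using hyinf⟩
        · exfalso
          have hyv : y ≠ v := by
            intro h'; subst h'
            rw [SimpleGraph.dist_self] at hyd; omega
          obtain ⟨h1, h2⟩ := IH τ0 (by omega) (by omega) y hyv hyinf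
          rw [eq_par_of_dist hT hadj hyd] at h2
          exact h (inf_mono hX (show τ0 - 1 ≤ τ0 by omega) (by omega) h2)

lemma infected_chain (hX : IsInfectionPath G v t X) (hT : G.IsTree) :
    ∀ k, ∀ w, G.dist u w = k → G.dist v w = G.dist v u + G.dist u w →
      ∀ τ ≤ t, (X w τ).IsInfected → k ≤ τ ∧ (X u (τ - k)).IsInfected := by
  have hc := hT.isConnected
  intro k
  induction k using Nat.strong_induction_on with
  | _ k IH =>
    match k with
    | 0 =>
      intro w hk _ τ hτ hinf
      have : u = w := (hc.dist_eq_zero_iff).1 hk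
      subst this
      simpa using hinf
    | k0 + 1 =>
      intro w hk hd τ hτ hinf
      have huw : u ≠ w := by
        intro h; subst h; rw [SimpleGraph.dist_self] at hk; omega
      obtain ⟨hwv, hadj, hd1, hd2⟩ := parent_step hT huw hd
      obtain ⟨h1, h2⟩ := infected_parent hX hT τ hτ w hwv hinf
      have hdk : G.dist u (par G v w) = k0 := by omega
      obtain ⟨h3, h4⟩ := IH k0 (by omega) (par G v w) hdk (by rw [hdk]; omega)
        (τ - 1) (by omega) h2
      refine ⟨by omega, ?_⟩
      have : τ - 1 - k0 = τ - (k0 + 1) := by omega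
      rwa [this] at h4

lemma susc_next (hX : IsInfectionPath G v t X) (h1 : τ + 1 ≤ t) (hs : X u τ = .susceptible) :
    X u (τ + 1) = .susceptible ∨ (X u (τ + 1)).IsInfected := by
  by_cases h : (X u (τ + 1)).IsInfected
  · exact Or.inr h
  · left
    obtain ⟨w, hadj, hwinf⟩ := (hX.susceptible_iff u τ (by omega) (by simp [hs, NodeState.IsInfected])).1 hs
    exact (hX.susceptible_iff u (τ+1) h1 h).2 ⟨w, hadj, inf_mono hX (by omega) h1 hwinf⟩

lemma nonsusc_next (hX : IsInfectionPath G v t X) (h1 : τ < t) (hs : X u τ = .nonsusceptible) :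
    ¬ (X u (τ + 1)).IsInfected := by
  intro h
  rcases hX.infect_from_susceptible u τ h1 h with h' | h' <;> rw [hs] at h' <;>
    simp [NodeState.IsInfected] at h'

end SIDyn
namespace SICount
open SILimited SIAux SIAux2 SIDyn SimpleGraph Finset

variable {V : Type*} {G : SimpleGraph V} {v u w x : V} {t τ : ℕ} {X : V → ℕ → NodeState}
variable {Ve : Set V} {p : ℝ} {q : V → ℝ}

noncomputable def Fcnt (t : ℕ) (Z : V → ℕ → NodeState) (u : V) : ℕ :=
  ((Finset.range t).filter (fun τ => (Z u τ).IsInfected)).card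

noncomputable def sigmaCnt (t : ℕ) (Z : V → ℕ → NodeState) (u : V) : ℕ :=
  ((Finset.range t).filter (fun τ => Z u τ = .susceptible)).card

noncomputable def sCnt (t : ℕ) (Z : V → ℕ → NodeState) (u : V) : ℕ :=
  ((Finset.range t).filter (fun τ => Z u τ = .susceptible ∧ Z u (τ+1) = .susceptible)).card

noncomputable def iCnt (t : ℕ) (Z : V → ℕ → NodeState) (u : V) : ℕ :=
  ((Finset.range t).filter (fun τ => ¬ (Z u τ).IsInfected ∧ ((Z u (τ+1)).IsInfected))).card

/-- explicit probability factor of a node -/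
noncomputable def cfac (q : V → ℝ) (Ve : Set V) (u : V) : ℝ :=
  if u ∈ Ve then q u else 1 - q u

lemma fi_mem (h : (X u τ).IsInfected) : (X u (firstInfection X u)).IsInfected :=
  Nat.sInf_mem (⟨τ, h⟩ : {τ | (X u τ).IsInfected}.Nonempty)

lemma fi_le (h : (X u τ).IsInfected) : firstInfection X u ≤ τ := Nat.sInf_le h

lemma fi_min (h : τ < firstInfection X u) : ¬ (X u τ).IsInfected :=
  Nat.notMem_of_lt_sInf h

lemma fi_pos (hX : IsInfectionPath G v t X) (hu : u ≠ v) (h : (X u τ).IsInfected) :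
    1 ≤ firstInfection X u := by
  rcases Nat.eq_zero_or_pos (firstInfection X u) with h0 | h0
  · exact absurd (h0 ▸ fi_mem h) (hX.init_uninfected u hu)
  · exact h0

lemma inf_iff_fi_le (hX : IsInfectionPath G v t X) (hinf : (X u t).IsInfected)
    (hτ : τ ≤ t) : (X u τ).IsInfected ↔ firstInfection X u ≤ τ := by
  constructor
  · exact fi_le
  · intro h
    exact inf_mono hX h hτ (fi_mem hinf)

lemma Fcnt_eq (hX : IsInfectionPath G v t X) (hinf : (X u t).IsInfected) :
    Fcnt t X u = t - firstInfection X u := by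
  have : ((Finset.range t).filter (fun τ => (X u τ).IsInfected)) =
      Finset.Ico (firstInfection X u) t := by
    ext τ
    simp only [Finset.mem_filter, Finset.mem_range, Finset.mem_Ico]
    constructor
    · intro ⟨h1, h2⟩; exact ⟨fi_le h2, h1⟩
    · intro ⟨h1, h2⟩; exact ⟨h2, (inf_iff_fi_le hX hinf (by omega)).2 h1⟩
  rw [Fcnt, this, Nat.card_Ico]

lemma Fcnt_eq_zero (hX : IsInfectionPath G v t X) (hninf : ¬ (X u t).IsInfected) :
    Fcnt t X u = 0 := by
  rw [Fcnt, Finset.card_eq_zero, Finset.filter_eq_empty_iff]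
  intro τ hτ
  simp only [Finset.mem_range] at hτ
  intro h
  exact hninf (inf_mono hX (by omega) le_rfl h)

lemma Fcnt_src (hX : IsInfectionPath G v t X) : Fcnt t X v = t := by
  rw [Fcnt]
  have : ((Finset.range t).filter (fun τ => (X v τ).IsInfected)) = Finset.range t := by
    apply Finset.filter_true_of_mem
    intro τ hτ
    simp only [Finset.mem_range] at hτ
    exact inf_mono hX (Nat.zero_le τ) (by omega) hX.source_infected
  rw [this, Finset.card_range]

lemma sigmaCnt_src (hX : IsInfectionPath G v t X) : sigmaCnt t X v = 0 := by
  rw [sigmaCnt, Finset.card_eq_zero, Finset.filter_eq_empty_iff]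
  intro τ hτ h
  simp only [Finset.mem_range] at hτ
  have := inf_mono hX (Nat.zero_le τ) (by omega) hX.source_infected
  rw [h] at this
  simp [NodeState.IsInfected] at this

lemma iCnt_src (hX : IsInfectionPath G v t X) : iCnt t X v = 0 := by
  rw [iCnt, Finset.card_eq_zero, Finset.filter_eq_empty_iff]
  intro τ hτ h
  simp only [Finset.mem_range] at hτ
  exact h.1 (inf_mono hX (Nat.zero_le τ) (by omega) hX.source_infected)

lemma iCnt_eq_zero (hX : IsInfectionPath G v t X) (hninf : ¬ (X u t).IsInfected) :
    iCnt t X u = 0 := by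
  rw [iCnt, Finset.card_eq_zero, Finset.filter_eq_empty_iff]
  intro τ hτ h
  simp only [Finset.mem_range] at hτ
  exact hninf (inf_mono hX (by omega) le_rfl h.2)

lemma iCnt_eq_one (hX : IsInfectionPath G v t X) (hu : u ≠ v) (hinf : (X u t).IsInfected) :
    iCnt t X u = 1 := by
  have h1 := fi_pos hX hu hinf
  have h2 : firstInfection X u ≤ t := fi_le hinf
  have : ((Finset.range t).filter
      (fun τ => ¬ (X u τ).IsInfected ∧ ((X u (τ+1)).IsInfected))) =
      {firstInfection X u - 1} := by
    ext τ
    simp only [Finset.mem_filter, Finset.mem_range, Finset.mem_singleton]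
    constructor
    · intro ⟨hτ, hn, hi⟩
      have l1 : τ < firstInfection X u := by
        by_contra hle
        exact hn ((inf_iff_fi_le hX hinf (by omega)).2 (by omega))
      have l2 : firstInfection X u ≤ τ + 1 := fi_le hi
      omega
    · intro h
      subst h
      refine ⟨by omega, fi_min (by omega), ?_⟩
      have : firstInfection X u - 1 + 1 = firstInfection X u := by omega
      rw [this]
      exact fi_mem hinf
  rw [iCnt, this, Finset.card_singleton]

lemma sigma_split (hX : IsInfectionPath G v t X) :
    sigmaCnt t X u = sCnt t X u + iCnt t X u := by
  rw [sigmaCnt, sCnt, iCnt]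
  have h1 : ∀ τ ∈ Finset.range t, (X u τ = .susceptible ↔
      ((X u τ = .susceptible ∧ X u (τ+1) = .susceptible) ∨
        (¬ (X u τ).IsInfected ∧ (X u (τ+1)).IsInfected))) := by
    intro τ hτ
    simp only [Finset.mem_range] at hτ
    constructor
    · intro hs
      rcases susc_next hX (by omega) hs with h | h
      · exact Or.inl ⟨hs, h⟩
      · exact Or.inr ⟨by simp [hs, NodeState.IsInfected], h⟩
    · intro h
      rcases h with ⟨h, -⟩ | ⟨h1', h2⟩
      · exact h
      · rcases hX.infect_from_susceptible u τ (by omega) h2 with h' | h'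
        · exact absurd h' h1'
        · exact h'
  rw [Finset.filter_congr h1, Finset.filter_or]
  rw [Finset.card_union_of_disjoint]
  rw [Finset.disjoint_filter]
  intro τ hτ ⟨hs1, hs2⟩ ⟨hn1, hn2⟩
  rw [hs2] at hn2
  simp [NodeState.IsInfected] at hn2

lemma inf_filter_subset (hX : IsInfectionPath G v t X) (hT : G.IsTree) (hu : u ≠ v) :
    ((Finset.range t).filter (fun τ => (X u τ).IsInfected)) ⊆
      ((Finset.range t).filter (fun τ => (X (par G v u) τ).IsInfected)) := by
  intro τ hτ
  simp only [Finset.mem_filter, Finset.mem_range] at hτ ⊢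
  obtain ⟨h1, h2⟩ := hτ
  refine ⟨h1, ?_⟩
  obtain ⟨l1, l2⟩ := infected_parent hX hT τ (by omega) u hu h2
  exact inf_mono hX (by omega) (by omega) l2

lemma sigma_eq_sub (hX : IsInfectionPath G v t X) (hT : G.IsTree) (hu : u ≠ v) :
    sigmaCnt t X u = Fcnt t X (par G v u) - Fcnt t X u ∧
      Fcnt t X u ≤ Fcnt t X (par G v u) := by
  have hc := hT.isConnected
  have hsub := inf_filter_subset hX hT hu
  constructor
  · have hset : ((Finset.range t).filter (fun τ => X u τ = .susceptible)) =
        ((Finset.range t).filter (fun τ => (X (par G v u) τ).IsInfected)) \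
          ((Finset.range t).filter (fun τ => (X u τ).IsInfected)) := by
      ext τ
      simp only [Finset.mem_filter, Finset.mem_range, Finset.mem_sdiff, not_and]
      constructor
      · intro ⟨h1, h2⟩
        have hnin : ¬ (X u τ).IsInfected := by simp [h2, NodeState.IsInfected]
        refine ⟨⟨h1, ?_⟩, fun _ => hnin⟩
        obtain ⟨y, hadj, hyinf⟩ := (hX.susceptible_iff u τ (by omega) hnin).1 h2
        rcases adj_classify hT hu hadj with hyp | hyd
        · exact hyp ▸ hyinf
        · exfalso
          have hyv : y ≠ v := by
            intro h'; subst h'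
            rw [SimpleGraph.dist_self] at hyd; omega
          obtain ⟨l1, l2⟩ := infected_parent hX hT τ (by omega) y hyv hyinf
          rw [eq_par_of_dist hT hadj hyd] at l2
          exact hnin (inf_mono hX (show τ - 1 ≤ τ by omega) (by omega) l2)
      · intro ⟨⟨h1, h2⟩, h3⟩
        have hnin : ¬ (X u τ).IsInfected := h3 h1
        refine ⟨h1, ?_⟩
        exact (hX.susceptible_iff u τ (by omega) hnin).2
          ⟨par G v u, (par_spec hc hu).1, h2⟩
    rw [sigmaCnt, hset, Finset.card_sdiff_of_subset hsub, Fcnt, Fcnt]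
  · exact Finset.card_le_card hsub

end SICount

namespace SIProd
open SILimited SIAux SIAux2 SIDyn SICount SimpleGraph Finset

variable {V : Type*} {G : SimpleGraph V} {v u w x : V} {t τ : ℕ} {X : V → ℕ → NodeState}
variable {Ve : Set V} {p : ℝ} {q : V → ℝ}

lemma trans_eq (hX : IsInfectionPath G v t X) (hcons : ConsistentWith Ve t X)
    (hτ : τ < t) :
    transProb p (q u) (X u τ) (X u (τ+1)) =
      (if X u τ = .susceptible ∧ X u (τ+1) = .susceptible then 1 - p
       else if ¬ (X u τ).IsInfected ∧ (X u (τ+1)).IsInfected then p * cfac q Ve u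
       else 1) := by
  cases h1 : X u τ with
  | susceptible =>
    rcases susc_next hX (by omega) h1 with h2 | h2
    · rw [h2]; simp [transProb, NodeState.IsInfected]
    · rcases (isInf_iff _).1 h2 with h3 | h3
      · rw [h3]
        have hnve : u ∉ Ve := by
          intro hve
          have := infn_mono hX (show τ + 1 ≤ t by omega) le_rfl h3
          have h4 := (hcons u).2 hve
          rw [this] at h4
          exact NodeState.noConfusion h4
        simp [transProb, NodeState.IsInfected, cfac, hnve]
      · rw [h3]
        have hve : u ∈ Ve := by
          apply (hcons u).1
          exact expl_mono hX (show τ + 1 ≤ t by omega) le_rfl h3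
        simp [transProb, NodeState.IsInfected, cfac, hve]
  | nonsusceptible =>
    have hnext : ¬ (X u (τ+1)).IsInfected := nonsusc_next hX hτ h1
    cases h2 : X u (τ+1) with
    | susceptible => simp [transProb, NodeState.IsInfected]
    | nonsusceptible => simp [transProb, NodeState.IsInfected]
    | infected => rw [h2] at hnext; simp [NodeState.IsInfected] at hnext
    | explicitN => rw [h2] at hnext; simp [NodeState.IsInfected] at hnext
  | infected =>
    have h2 := hX.infected_stays u τ hτ h1
    rw [h2]
    simp [transProb, NodeState.IsInfected]
  | explicitN =>
    have h2 := hX.explicit_stays u τ hτ h1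
    rw [h2]
    simp [transProb, NodeState.IsInfected]

lemma prod_ite_ite {α : Type*} (s : Finset α) (P Q : α → Prop) [DecidablePred P]
    [DecidablePred Q] (x y : ℝ)
    (hd : ∀ a ∈ s, P a → ¬ Q a) :
    (∏ a ∈ s, (if P a then x else if Q a then y else 1)) =
      x ^ (s.filter P).card * y ^ (s.filter Q).card := by
  have h : ∀ a ∈ s, (if P a then x else if Q a then y else 1) =
      (if P a then x else 1) * (if Q a then y else 1) := by
    intro a ha
    by_cases hP : P a
    · simp [hP, hd a ha hP]
    · simp [hP]
  rw [Finset.prod_congr rfl h, Finset.prod_mul_distrib]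
  congr 1
  · rw [← Finset.prod_filter, Finset.prod_const]
  · rw [← Finset.prod_filter, Finset.prod_const]

lemma node_prod (hX : IsInfectionPath G v t X) (hcons : ConsistentWith Ve t X) (u : V) :
    (∏ τ ∈ Finset.range t, transProb p (q u) (X u τ) (X u (τ+1))) =
      (1 - p) ^ (sCnt t X u) * (p * cfac q Ve u) ^ (iCnt t X u) := by
  rw [Finset.prod_congr rfl (fun τ hτ => trans_eq hX hcons (Finset.mem_range.1 hτ))]
  have hd : ∀ τ ∈ Finset.range t,
      (X u τ = .susceptible ∧ X u (τ+1) = .susceptible) →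
      ¬ (¬ (X u τ).IsInfected ∧ (X u (τ+1)).IsInfected) := by
    intro τ hτ hP hQ
    rw [hP.2] at hQ
    exact (by simp [NodeState.IsInfected] : ¬ (NodeState.susceptible).IsInfected) hQ.2
  rw [prod_ite_ite _ _ _ _ _ hd]
  simp only [sCnt, iCnt, Finset.filter_congr_decidable]

lemma outside_nonsusc (hX : IsInfectionPath G v t X) (hc : G.Connected)
    (hd : ¬ G.dist v u ≤ t + 1) (hτ : τ ≤ t) : X u τ = .nonsusceptible := by
  have hnin : ¬ (X u τ).IsInfected := fun h =>
    hd (le_trans (inf_dist hX hc τ hτ u h) (by omega))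
  rcases (not_isInf_iff _).1 hnin with hs | hs
  · exfalso
    obtain ⟨w, hadj, hwinf⟩ := (hX.susceptible_iff u τ hτ hnin).1 hs
    have l1 := inf_dist hX hc τ hτ w hwinf
    have l2 : G.dist v u ≤ G.dist v w + 1 := dist_adj_le hc hadj.symm
    omega
  · exact hs

lemma node_prod_one (hX : IsInfectionPath G v t X) (hc : G.Connected)
    (hd : ¬ G.dist v u ≤ t + 1) :
    (∏ τ ∈ Finset.range t, transProb p (q u) (X u τ) (X u (τ+1))) = 1 := by
  apply Finset.prod_eq_one
  intro τ hτ
  simp only [Finset.mem_range] at hτ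
  rw [outside_nonsusc hX hc hd (by omega), outside_nonsusc hX hc hd (by omega)]
  simp [transProb]

lemma src_explicit_iff (hX : IsInfectionPath G v t X) (hcons : ConsistentWith Ve t X) :
    (X v 0 = .explicitN ↔ v ∈ Ve) := by
  rcases (isInf_iff _).1 hX.source_infected with h | h
  · have h2 := infn_mono hX (Nat.zero_le t) le_rfl h
    constructor
    · intro h3; rw [h3] at h; exact NodeState.noConfusion h
    · intro h3
      have := (hcons v).2 h3
      rw [this] at h2
      exact NodeState.noConfusion h2
  · exact ⟨fun _ => (hcons v).1 (expl_mono hX (Nat.zero_le t) le_rfl h), fun _ => h⟩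

lemma pathProb_eq (hT : G.IsTree) (hX : IsInfectionPath G v t X)
    (hcons : ConsistentWith Ve t X)
    {B : Finset V} (hB : ∀ u : V, u ∉ B → ¬ G.dist v u ≤ t + 1) :
    pathProb p q v t X =
      (if v ∈ Ve then q v else 1 - q v) *
      ((1 - p) ^ (∑ u ∈ B, sCnt t X u) *
        ∏ u ∈ B.filter (fun u => u ≠ v ∧ (X u t).IsInfected), (p * cfac q Ve u)) := by
  have hc := hT.isConnected
  rw [pathProb]
  congr 1
  · by_cases h : v ∈ Ve
    · rw [if_pos h, if_pos ((src_explicit_iff hX hcons).2 h)]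
    · rw [if_neg h, if_neg (fun h' => h ((src_explicit_iff hX hcons).1 h'))]
  · rw [finprod_eq_prod_of_mulSupport_subset _ (s := B) ?hsupp]
    case hsupp =>
      intro u hu
      simp only [Function.mem_mulSupport] at hu
      by_contra hnB
      exact hu (node_prod_one hX hc (hB u hnB))
    rw [Finset.prod_congr rfl (fun u _ => node_prod hX hcons u)]
    rw [Finset.prod_mul_distrib, Finset.prod_pow_eq_pow_sum]
    congr 1
    rw [Finset.prod_filter]
    apply Finset.prod_congr rfl
    intro u hu
    by_cases h1 : u ≠ v ∧ (X u t).IsInfected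
    · rw [if_pos h1, iCnt_eq_one hX h1.1 h1.2, pow_one]
    · rw [if_neg h1]
      rcases Classical.em (u = v) with h2 | h2
      · subst h2; rw [iCnt_src hX, pow_zero]
      · have h3 : ¬ (X u t).IsInfected := by
          by_contra h4
          exact h1 ⟨h2, h4⟩
        rw [iCnt_eq_zero hX h3, pow_zero]

end SIProd

namespace SISpan
open SILimited SIAux SIAux2 SIDyn SICount SIProd SimpleGraph Finset

variable {V : Type*} {G : SimpleGraph V} {v u w x e : V} {t τ : ℕ} {Z : V → ℕ → NodeState}
variable {Ve : Set V} {p : ℝ} {q : V → ℝ}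

lemma span_source : v ∈ spanVerts G (Ve ∪ {v}) := by
  refine ⟨v, Or.inr rfl, v, Or.inr rfl, ?_⟩
  simp [SimpleGraph.dist_self]

lemma span_geo (hT : G.IsTree) (hw : w ∈ spanVerts G (Ve ∪ {v})) :
    w = v ∨ ∃ e ∈ Ve, G.dist v e = G.dist v w + G.dist w e := by
  have hc := hT.isConnected
  obtain ⟨a, ha, b, hb, hab⟩ := hw
  rcases four_point (v := v) hT hab with h | h
  · rcases ha with ha | ha
    · exact Or.inr ⟨a, ha, h⟩
    · left
      rw [Set.mem_singleton_iff] at ha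
      rw [ha, SimpleGraph.dist_self] at h
      exact ((hc.dist_eq_zero_iff).1 (by omega : G.dist v w = 0)).symm
  · rcases hb with hb | hb
    · exact Or.inr ⟨b, hb, h⟩
    · left
      rw [Set.mem_singleton_iff] at hb
      rw [hb, SimpleGraph.dist_self] at h
      exact ((hc.dist_eq_zero_iff).1 (by omega : G.dist v w = 0)).symm

lemma mem_span (he : e ∈ Ve) (hd : G.dist v e = G.dist v w + G.dist w e) :
    w ∈ spanVerts G (Ve ∪ {v}) :=
  ⟨v, Or.inr rfl, e, Or.inl he, hd⟩

lemma span_infected (hT : G.IsTree) (hZ : IsInfectionPath G v t Z)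
    (hcons : ConsistentWith Ve t Z) (hw : w ∈ spanVerts G (Ve ∪ {v})) :
    (Z w t).IsInfected := by
  rcases span_geo hT hw with h | ⟨e, he, hd⟩
  · subst h
    exact inf_mono hZ (Nat.zero_le t) le_rfl hZ.source_infected
  · have hinf : (Z e t).IsInfected := by
      rw [(hcons e).2 he]
      simp [NodeState.IsInfected]
    obtain ⟨h1, h2⟩ := infected_chain (u := w) hZ hT (G.dist w e) e rfl hd t le_rfl hinf
    exact inf_mono hZ (Nat.sub_le _ _) le_rfl h2

lemma span_dist_le (hT : G.IsTree) (hZ : IsInfectionPath G v t Z)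
    (hcons : ConsistentWith Ve t Z) (hw : w ∈ spanVerts G (Ve ∪ {v})) : G.dist v w ≤ t :=
  inf_dist hZ hT.isConnected t le_rfl w (span_infected hT hZ hcons hw)

lemma subtree_self (hu : u ∈ spanVerts G (Ve ∪ {v})) :
    u ∈ subtreeAway G u v ∩ spanVerts G (Ve ∪ {v}) := by
  refine ⟨?_, hu⟩
  simp [subtreeAway, SimpleGraph.dist_self]

lemma subtree_bdd (hT : G.IsTree) (hZ : IsInfectionPath G v t Z)
    (hcons : ConsistentWith Ve t Z) (u : V) :
    BddAbove (G.dist u '' (subtreeAway G u v ∩ spanVerts G (Ve ∪ {v}))) := by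
  refine ⟨G.dist u v + t, ?_⟩
  rintro k ⟨w, ⟨hw1, hw2⟩, rfl⟩
  calc G.dist u w ≤ G.dist u v + G.dist v w := hT.isConnected.dist_triangle
    _ ≤ G.dist u v + t := by
        have := span_dist_le hT hZ hcons hw2; omega

lemma dbar_spec (hT : G.IsTree) (hZ : IsInfectionPath G v t Z)
    (hcons : ConsistentWith Ve t Z) (hu : u ∈ spanVerts G (Ve ∪ {v})) :
    ∃ w0 ∈ subtreeAway G u v ∩ spanVerts G (Ve ∪ {v}),
      G.dist u w0 = dbar G u (subtreeAway G u v ∩ spanVerts G (Ve ∪ {v})) := by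
  have hne : (G.dist u '' (subtreeAway G u v ∩ spanVerts G (Ve ∪ {v}))).Nonempty :=
    ⟨G.dist u u, u, subtree_self hu, rfl⟩
  have hmem := Nat.sSup_mem hne (subtree_bdd hT hZ hcons u)
  obtain ⟨w0, hw0, heq⟩ := hmem
  exact ⟨w0, hw0, heq⟩

lemma fi_add_dbar_le (hT : G.IsTree) (hZ : IsInfectionPath G v t Z)
    (hcons : ConsistentWith Ve t Z) (hu : u ∈ spanVerts G (Ve ∪ {v})) :
    firstInfection Z u + dbar G u (subtreeAway G u v ∩ spanVerts G (Ve ∪ {v})) ≤ t ∧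
      (Z u t).IsInfected := by
  obtain ⟨w0, ⟨hw01, hw02⟩, heq⟩ := dbar_spec hT hZ hcons hu
  have hinf0 : (Z w0 t).IsInfected := span_infected hT hZ hcons hw02
  have hd : G.dist v w0 = G.dist v u + G.dist u w0 := hw01
  obtain ⟨h1, h2⟩ := infected_chain (u := u) hZ hT (G.dist u w0) w0 rfl hd t le_rfl hinf0
  have h3 : firstInfection Z u ≤ t - G.dist u w0 := fi_le h2
  have h4 : (Z u t).IsInfected := inf_mono hZ (Nat.sub_le _ _) le_rfl h2
  rw [← heq]
  exact ⟨by omega, h4⟩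

lemma Fcnt_ge_dbar (hT : G.IsTree) (hZ : IsInfectionPath G v t Z)
    (hcons : ConsistentWith Ve t Z) (hu : u ∈ spanVerts G (Ve ∪ {v})) :
    dbar G u (subtreeAway G u v ∩ spanVerts G (Ve ∪ {v})) ≤ Fcnt t Z u := by
  obtain ⟨h1, h2⟩ := fi_add_dbar_le hT hZ hcons hu
  rw [Fcnt_eq hZ h2]
  omega

end SISpan

namespace SISum
open SILimited SIAux SIAux2 SIDyn SICount SIProd SISpan SimpleGraph Finset

variable {V : Type*} {G : SimpleGraph V} {v u w : V} {t : ℕ} {Z : V → ℕ → NodeState}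
variable {Ve : Set V}

lemma Msum (hT : G.IsTree) (hZ : IsInfectionPath G v t Z) {B : Finset V} (hvB : v ∈ B)
    (hpar : ∀ u ∈ B.erase v, par G v u ∈ B) :
    (∑ u ∈ B, (sigmaCnt t Z u : ℤ)) =
      ∑ w ∈ B, ((((B.erase v).filter (fun u => par G v u = w)).card : ℤ) -
        (if w = v then 0 else 1)) * (Fcnt t Z w : ℤ) := by
  have h0 : (∑ u ∈ B, (sigmaCnt t Z u : ℤ)) = ∑ u ∈ B.erase v, (sigmaCnt t Z u : ℤ) := by
    rw [← Finset.add_sum_erase B _ hvB, sigmaCnt_src hZ]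
    simp
  rw [h0]
  have h1 : ∀ u ∈ B.erase v, (sigmaCnt t Z u : ℤ) =
      (Fcnt t Z (par G v u) : ℤ) - (Fcnt t Z u : ℤ) := by
    intro u hu
    have huv : u ≠ v := (Finset.mem_erase.1 hu).1
    obtain ⟨e1, e2⟩ := sigma_eq_sub hZ hT huv
    rw [e1]
    push_cast [e2]
    ring
  rw [Finset.sum_congr rfl h1, Finset.sum_sub_distrib]
  have h2 : (∑ u ∈ B.erase v, (Fcnt t Z (par G v u) : ℤ)) =
      ∑ w ∈ B, (((B.erase v).filter (fun u => par G v u = w)).card : ℤ) *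
        (Fcnt t Z w : ℤ) := by
    rw [← Finset.sum_fiberwise_of_maps_to' hpar (fun w => (Fcnt t Z w : ℤ))]
    apply Finset.sum_congr rfl
    intro w _
    rw [Finset.sum_const, nsmul_eq_mul]
  have h3 : (∑ w ∈ B, (if w = v then (0:ℤ) else 1) * (Fcnt t Z w : ℤ)) =
      ∑ u ∈ B.erase v, (Fcnt t Z u : ℤ) := by
    rw [← Finset.add_sum_erase B _ hvB, if_pos rfl, zero_mul, zero_add]
    apply Finset.sum_congr rfl
    intro w hw
    rw [if_neg (Finset.mem_erase.1 hw).1, one_mul]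
  rw [h2, ← h3, ← Finset.sum_sub_distrib]
  apply Finset.sum_congr rfl
  intro w _
  ring

lemma inf_of_Fcnt_ne (hc : G.Connected) (hZ : IsInfectionPath G v t Z)
    (h : Fcnt t Z w ≠ 0) : (Z w t).IsInfected ∧ G.dist v w ≤ t := by
  rw [Fcnt, ← Nat.pos_iff_ne_zero, Finset.card_pos] at h
  obtain ⟨τ, hτ⟩ := h
  rw [Finset.mem_filter, Finset.mem_range] at hτ
  obtain ⟨h1, h2⟩ := hτ
  constructor
  · exact inf_mono hZ (by omega) le_rfl h2
  · have := inf_dist hZ hc τ (by omega) w h2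
    omega

lemma cnt_pos (hT : G.IsTree) (hloc : ∀ u : V, (G.neighborSet u).Finite)
    (hdeg : 2 ≤ (G.neighborSet w).ncard) (hw : w ≠ v) (hdw : G.dist v w ≤ t)
    {B : Finset V} (hB : ∀ x : V, G.dist v x ≤ t + 1 → x ∈ B) :
    1 ≤ ((B.erase v).filter (fun u => par G v u = w)).card := by
  have hc := hT.isConnected
  have hne : (G.neighborSet w \ {par G v w}).Nonempty := by
    rw [Set.nonempty_iff_ne_empty]
    intro h
    rw [Set.diff_eq_empty] at h
    have := Set.ncard_le_ncard h (Set.finite_singleton _)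
    rw [Set.ncard_singleton] at this
    omega
  obtain ⟨x, hx1, hx2⟩ := hne
  rw [Set.mem_singleton_iff] at hx2
  have hadj : G.Adj w x := hx1
  have hdx : G.dist v x = G.dist v w + 1 := by
    rcases adj_classify hT hw hadj with h | h
    · exact absurd h hx2
    · exact h
  have hxv : x ≠ v := by
    intro h; subst h
    rw [SimpleGraph.dist_self] at hdx
    omega
  rw [Nat.succ_le_iff, Finset.card_pos]
  refine ⟨x, ?_⟩
  rw [Finset.mem_filter, Finset.mem_erase]
  exact ⟨⟨hxv, hB x (by omega)⟩, eq_par_of_dist hT hadj hdx⟩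

end SISum

open SILimited

/-- If `G` is a tree, then for any node `v` and any feasible elapsed time
`t ∈ 𝒯_v`, the latest infection path for `(v,t)` is a most likely infection path for `(v,t)`,
i.e., it maximizes `P_v` over all infection paths consistent with `Ve` at elapsed time `t`. -/
theorem latest_path_is_most_likely
    {V : Type*} [Infinite V] (G : SimpleGraph V) (hT : G.IsTree)
    (hloc : ∀ u : V, (G.neighborSet u).Finite)
    (hdeg : ∀ u : V, 2 ≤ (G.neighborSet u).ncard)
    (p : ℝ) (hp0 : 0 < p) (hp1 : p < 1)
    (q : V → ℝ) (hq0 : ∀ u, max 0 (2 - 1 / p) ≤ q u) (hq1 : ∀ u, q u ≤ 1)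
    (Ve : Set V) (hVene : Ve.Nonempty) (hVefin : Ve.Finite)
    (v : V) (t : ℕ) (ht : t ∈ feasibleTimes G Ve v) :
    ∀ X, IsLatestPath G Ve v t X → IsMostLikely G p q Ve v t X := by
  classical
  intro X hlatest
  obtain ⟨hXpath, hXcons, hout, hfi⟩ := hlatest
  have hc := hT.isConnected
  refine ⟨⟨hXpath, hXcons⟩, ?_⟩
  intro Y hY
  obtain ⟨hYpath, hYcons⟩ := hY
  -- the finite ball
  have hballfin := SIAux2.ball_finite hc hloc v (t+1)
  set B : Finset V := hballfin.toFinset with hBdef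
  have hBmem : ∀ x : V, x ∈ B ↔ G.dist v x ≤ t + 1 := fun x => hballfin.mem_toFinset
  have hBout : ∀ u : V, u ∉ B → ¬ G.dist v u ≤ t + 1 := fun u hu h => hu ((hBmem u).2 h)
  have hvB : v ∈ B := (hBmem v).2 (by simp [SimpleGraph.dist_self])
  have hpar : ∀ u ∈ B.erase v, SIAux2.par G v u ∈ B := by
    intro u hu
    obtain ⟨huv, huB⟩ := Finset.mem_erase.1 hu
    obtain ⟨-, hd⟩ := SIAux2.par_spec hc huv
    rw [hBmem] at huB ⊢
    omega
  -- product formulas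
  have hPX := SIProd.pathProb_eq (p := p) (q := q) hT hXpath hXcons hBout
  have hPY := SIProd.pathProb_eq (p := p) (q := q) hT hYpath hYcons hBout
  set DX := B.filter (fun u => u ≠ v ∧ (X u t).IsInfected) with hDXdef
  set DY := B.filter (fun u => u ≠ v ∧ (Y u t).IsInfected) with hDYdef
  have hXspan : ∀ u, (X u t).IsInfected → u ∈ spanVerts G (Ve ∪ {v}) := by
    intro u hinf
    by_contra h
    exact hout u h t le_rfl hinf
  have hDXY : DX ⊆ DY := by
    intro u hu
    rw [hDXdef, Finset.mem_filter] at hu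
    obtain ⟨h1, h2, h3⟩ := hu
    rw [hDYdef, Finset.mem_filter]
    exact ⟨h1, h2, SISpan.span_infected hT hYpath hYcons (hXspan u h3)⟩
  -- F comparison
  have hFXY : ∀ w ∈ B,
      ((((B.erase v).filter (fun u => SIAux2.par G v u = w)).card : ℤ) -
        (if w = v then 0 else 1)) * (SICount.Fcnt t X w : ℤ) ≤
      ((((B.erase v).filter (fun u => SIAux2.par G v u = w)).card : ℤ) -
        (if w = v then 0 else 1)) * (SICount.Fcnt t Y w : ℤ) := by
    intro w hwB
    set aw : ℤ := (((B.erase v).filter (fun u => SIAux2.par G v u = w)).card : ℤ) -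
      (if w = v then 0 else 1) with hawdef
    have haw_pos : (w ≠ v → G.dist v w ≤ t → 0 ≤ aw) ∧ (w = v → 0 ≤ aw) := by
      constructor
      · intro hwv hdw
        have h1 := SISum.cnt_pos hT hloc (hdeg w) hwv hdw (fun x hx => (hBmem x).2 hx)
        rw [hawdef, if_neg hwv]
        have : (1:ℤ) ≤ (((B.erase v).filter (fun u => SIAux2.par G v u = w)).card : ℤ) := by
          exact_mod_cast h1
        omega
      · intro hwv
        rw [hawdef, if_pos hwv]
        simp
    by_cases hFX : SICount.Fcnt t X w = 0
    · rw [hFX]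
      by_cases hFY : SICount.Fcnt t Y w = 0
      · rw [hFY]
      · have ⟨hinfY, hdw⟩ := SISum.inf_of_Fcnt_ne hc hYpath hFY
        have haw : 0 ≤ aw := by
          by_cases hwv : w = v
          · exact haw_pos.2 hwv
          · exact haw_pos.1 hwv hdw
        have : (0:ℤ) ≤ (SICount.Fcnt t Y w : ℤ) := by positivity
        push_cast
        nlinarith
    · have ⟨hinfX, hdw⟩ := SISum.inf_of_Fcnt_ne hc hXpath hFX
      by_cases hwv : w = v
      · subst hwv
        rw [SICount.Fcnt_src hXpath, SICount.Fcnt_src hYpath]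
      · have haw : 0 ≤ aw := haw_pos.1 hwv hdw
        have hspan : w ∈ spanVerts G (Ve ∪ {v}) := hXspan w hinfX
        have hXd : SICount.Fcnt t X w =
            dbar G w (subtreeAway G w v ∩ spanVerts G (Ve ∪ {v})) := by
          obtain ⟨hle, hinf⟩ := SISpan.fi_add_dbar_le hT hXpath hXcons hspan
          rw [SICount.Fcnt_eq hXpath hinf, hfi w hspan hwv]
          rw [hfi w hspan hwv] at hle
          omega
        have hYd := SISpan.Fcnt_ge_dbar hT hYpath hYcons hspan
        apply mul_le_mul_of_nonneg_left _ haw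
        rw [hXd]
        exact_mod_cast le_trans le_rfl (by exact_mod_cast hYd)
  -- M comparison
  have hMint : (∑ u ∈ B, (SICount.sigmaCnt t X u : ℤ)) ≤
      ∑ u ∈ B, (SICount.sigmaCnt t Y u : ℤ) := by
    rw [SISum.Msum hT hXpath hvB hpar, SISum.Msum hT hYpath hvB hpar]
    exact Finset.sum_le_sum hFXY
  have hM : (∑ u ∈ B, SICount.sigmaCnt t X u) ≤ ∑ u ∈ B, SICount.sigmaCnt t Y u := by
    have h1 : ((∑ u ∈ B, SICount.sigmaCnt t X u : ℕ) : ℤ) ≤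
        ((∑ u ∈ B, SICount.sigmaCnt t Y u : ℕ) : ℤ) := by
      push_cast
      exact hMint
    exact_mod_cast h1
  -- sigma = s + i, sum of i = card D
  have hiX : ∑ u ∈ B, SICount.iCnt t X u = DX.card := by
    rw [hDXdef, Finset.card_filter]
    apply Finset.sum_congr rfl
    intro u hu
    by_cases h1 : u ≠ v ∧ (X u t).IsInfected
    · rw [if_pos h1, SICount.iCnt_eq_one hXpath h1.1 h1.2]
    · rw [if_neg h1]
      by_cases h2 : u = v
      · subst h2; exact SICount.iCnt_src hXpath
      · exact SICount.iCnt_eq_zero hXpath (fun h3 => h1 ⟨h2, h3⟩)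
  have hiY : ∑ u ∈ B, SICount.iCnt t Y u = DY.card := by
    rw [hDYdef, Finset.card_filter]
    apply Finset.sum_congr rfl
    intro u hu
    by_cases h1 : u ≠ v ∧ (Y u t).IsInfected
    · rw [if_pos h1, SICount.iCnt_eq_one hYpath h1.1 h1.2]
    · rw [if_neg h1]
      by_cases h2 : u = v
      · subst h2; exact SICount.iCnt_src hYpath
      · exact SICount.iCnt_eq_zero hYpath (fun h3 => h1 ⟨h2, h3⟩)
  have hsX : ∑ u ∈ B, SICount.sigmaCnt t X u =
      (∑ u ∈ B, SICount.sCnt t X u) + DX.card := by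
    rw [← hiX, ← Finset.sum_add_distrib]
    exact Finset.sum_congr rfl fun u _ => SICount.sigma_split hXpath
  have hsY : ∑ u ∈ B, SICount.sigmaCnt t Y u =
      (∑ u ∈ B, SICount.sCnt t Y u) + DY.card := by
    rw [← hiY, ← Finset.sum_add_distrib]
    exact Finset.sum_congr rfl fun u _ => SICount.sigma_split hYpath
  have hdle : DX.card ≤ DY.card := Finset.card_le_card hDXY
  have hexp : (∑ u ∈ B, SICount.sCnt t X u) ≤
      (∑ u ∈ B, SICount.sCnt t Y u) + (DY.card - DX.card) := by omega
  -- numeric facts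
  have hp1' : (0:ℝ) ≤ 1 - p := by linarith
  have hp1'' : (1:ℝ) - p ≤ 1 := by linarith
  have hc0 : 0 ≤ (if v ∈ Ve then q v else 1 - q v) := by
    by_cases h : v ∈ Ve
    · rw [if_pos h]; exact le_trans (le_max_left 0 _) (hq0 v)
    · rw [if_neg h]; linarith [hq1 v]
  have hcf : ∀ u : V, 0 ≤ p * SICount.cfac q Ve u := by
    intro u
    apply mul_nonneg hp0.le
    rw [SICount.cfac]
    by_cases h : u ∈ Ve
    · rw [if_pos h]; exact le_trans (le_max_left 0 _) (hq0 u)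
    · rw [if_neg h]; linarith [hq1 u]
  have hcfle : ∀ u : V, u ∉ Ve → p * SICount.cfac q Ve u ≤ 1 - p := by
    intro u hu
    rw [SICount.cfac, if_neg hu]
    have h2 : 2 - 1/p ≤ q u := le_trans (le_max_right 0 _) (hq0 u)
    have h3 : p * (2 - 1/p) ≤ p * q u := mul_le_mul_of_nonneg_left h2 hp0.le
    have h4 : p * (2 - 1/p) = 2*p - 1 := by field_simp
    have h5 : p * (1 - q u) = p - p * q u := by ring
    linarith
  have hPXnn : (0:ℝ) ≤ ∏ u ∈ DX, (p * SICount.cfac q Ve u) :=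
    Finset.prod_nonneg fun u _ => hcf u
  -- elements of DY \ DX are not explicit
  have hnotVe : ∀ u ∈ DY \ DX, u ∉ Ve := by
    intro u hu hVe
    rw [Finset.mem_sdiff] at hu
    obtain ⟨hu1, hu2⟩ := hu
    rw [hDYdef, Finset.mem_filter] at hu1
    apply hu2
    rw [hDXdef, Finset.mem_filter]
    refine ⟨hu1.1, hu1.2.1, ?_⟩
    rw [(hXcons u).2 hVe]
    simp [NodeState.IsInfected]
  have hsdiff : ∏ u ∈ DY \ DX, (p * SICount.cfac q Ve u) ≤ (1 - p) ^ (DY.card - DX.card) := by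
    rw [← Finset.card_sdiff_of_subset hDXY, ← Finset.prod_const]
    exact Finset.prod_le_prod (fun u _ => hcf u) (fun u hu => hcfle u (hnotVe u hu))
  -- final chain
  rw [hPX, hPY]
  apply mul_le_mul_of_nonneg_left _ hc0
  rw [← Finset.prod_sdiff hDXY]
  calc (1 - p) ^ (∑ u ∈ B, SICount.sCnt t Y u) *
        ((∏ u ∈ DY \ DX, (p * SICount.cfac q Ve u)) * ∏ u ∈ DX, (p * SICount.cfac q Ve u))
      ≤ (1 - p) ^ (∑ u ∈ B, SICount.sCnt t Y u) *
        ((1 - p) ^ (DY.card - DX.card) * ∏ u ∈ DX, (p * SICount.cfac q Ve u)) := by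
        apply mul_le_mul_of_nonneg_left _ (pow_nonneg hp1' _)
        exact mul_le_mul_of_nonneg_right hsdiff hPXnn
    _ = (1 - p) ^ ((∑ u ∈ B, SICount.sCnt t Y u) + (DY.card - DX.card)) *
        ∏ u ∈ DX, (p * SICount.cfac q Ve u) := by
        rw [pow_add]; ring
    _ ≤ (1 - p) ^ (∑ u ∈ B, SICount.sCnt t X u) * ∏ u ∈ DX, (p * SICount.cfac q Ve u) := by
        apply mul_le_mul_of_nonneg_right _ hPXnn
        exact pow_le_pow_of_le_one hp1' hp1'' hexp
end

section
/- Suppose the underlying network G is a tree. Then for any node v ∈ V, the set of feasible elapsed times is exactly 𝒯_v = {t ∈ ℕ : t ≥ d̄(v, V_e)}, i.e., an infection path starting at v and consistent with V_e exists at elapsed time t if and only if t ≥ d̄(v, V_e). -/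
open scoped Classical

open SILimited

private lemma exists_adj_dist_le {V : Type*} (G : SimpleGraph V) (hconn : G.Connected)
    (v u : V) (n : ℕ) (h : G.dist v u = n + 1) : ∃ w, G.Adj u w ∧ G.dist v w ≤ n := by
  obtain ⟨p, hp⟩ := hconn.exists_walk_length_eq_dist u v
  rw [SimpleGraph.dist_comm, h] at hp
  cases p with
  | nil => simp at hp
  | cons hadj q =>
    rename_i w
    refine ⟨w, hadj, ?_⟩
    have := SimpleGraph.dist_le q.reverse
    simp [SimpleGraph.Walk.length_cons] at hp
    simpa [SimpleGraph.dist_comm, hp] using this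

/-- If `G` is a tree, then for any node `v`, the set of feasible elapsed times
is exactly `𝒯_v = {t : ℕ | t ≥ d̄(v, Ve)}`: a consistent infection path with source `v`
exists at elapsed time `t` if and only if `t ≥ d̄(v, Ve)`. -/
theorem feasibleTimes_eq_Ici_infection_range
    {V : Type*} [Infinite V] (G : SimpleGraph V) (hT : G.IsTree)
    (hloc : ∀ u : V, (G.neighborSet u).Finite)
    (hdeg : ∀ u : V, 2 ≤ (G.neighborSet u).ncard)
    (p : ℝ) (hp0 : 0 < p) (hp1 : p < 1)
    (q : V → ℝ) (hq0 : ∀ u, max 0 (2 - 1 / p) ≤ q u) (hq1 : ∀ u, q u ≤ 1)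
    (Ve : Set V) (hVene : Ve.Nonempty) (hVefin : Ve.Finite)
    (v : V) :
    feasibleTimes G Ve v = {t : ℕ | dbar G v Ve ≤ t} := by
  classical
  have hconn : G.Connected := hT.isConnected
  ext t
  simp only [feasibleTimes, Set.mem_setOf_eq]
  constructor
  · rintro ⟨X, hX, hC⟩
    have key : ∀ τ, ∀ u : V, (X u τ).IsInfected → τ ≤ t → G.dist v u ≤ τ := by
      intro τ
      induction τ with
      | zero =>
        intro u hu _
        by_cases h : u = v
        · subst h; simp
        · exact absurd hu (hX.init_uninfected u h)
      | succ τ ih =>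
        intro u hu hle
        rcases hX.infect_from_susceptible u τ (by omega) hu with h | h
        · exact (ih u h (by omega)).trans (by omega)
        · have hni : ¬ (X u τ).IsInfected := by
            rw [h]; simp [NodeState.IsInfected]
          obtain ⟨w, hadj, hw⟩ := (hX.susceptible_iff u τ (by omega) hni).mp h
          have h1 := ih w hw (by omega)
          have h2 : G.dist v u ≤ G.dist v w + G.dist w u := hconn.dist_triangle
          have h3 : G.dist w u ≤ 1 := by
            simpa using SimpleGraph.dist_le hadj.symm.toWalk
          omega
    have hub : ∀ u ∈ Ve, G.dist v u ≤ t := fun u hu =>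
      key t u (by rw [(hC u).mpr hu]; trivial) le_rfl
    refine csSup_le (hVene.image _) ?_
    rintro _ ⟨u, hu, rfl⟩
    exact hub u hu
  · intro ht
    have hdist_le : ∀ u ∈ Ve, G.dist v u ≤ t := by
      intro u hu
      refine le_trans ?_ ht
      exact le_csSup ((hVefin.image _).bddAbove) ⟨u, hu, rfl⟩
    set X : V → ℕ → NodeState := fun u τ =>
      if G.dist v u ≤ τ then (if u ∈ Ve then .explicitN else .infected)
      else if G.dist v u = τ + 1 then .susceptible else .nonsusceptible with hXdef
    have hinf : ∀ u τ, (X u τ).IsInfected ↔ G.dist v u ≤ τ := by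
      intro u τ
      by_cases h : G.dist v u ≤ τ
      · simp only [hXdef, if_pos h]
        split <;> simp [NodeState.IsInfected, h]
      · simp only [hXdef, if_neg h]
        split <;> simp [NodeState.IsInfected, h]
    refine ⟨X, ⟨?_, ?_, ?_, ?_, ?_, ?_⟩, ?_⟩
    · rw [hinf]; simp
    · intro u hu
      rw [hinf]
      intro hle
      exact hu (((hconn.dist_eq_zero_iff).mp (Nat.le_zero.mp hle)).symm)
    · intro u τ hτ hni
      rw [hinf] at hni
      push_neg at hni
      constructor
      · intro hs
        have hd : G.dist v u = τ + 1 := by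
          by_contra hd
          simp [hXdef, Nat.not_le.mpr hni, hd] at hs
        obtain ⟨w, hadj, hw⟩ := exists_adj_dist_le G hconn v u τ hd
        exact ⟨w, hadj, (hinf w τ).mpr hw⟩
      · rintro ⟨w, hadj, hw⟩
        rw [hinf] at hw
        have h2 : G.dist v u ≤ G.dist v w + G.dist w u := hconn.dist_triangle
        have h3 : G.dist w u ≤ 1 := by
          simpa using SimpleGraph.dist_le hadj.symm.toWalk
        have hd : G.dist v u = τ + 1 := by omega
        simp [hXdef, Nat.not_le.mpr (by omega : τ < G.dist v u), hd]
    · intro u τ _ h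
      have hle : G.dist v u ≤ τ := by
        by_contra hc
        simp [hXdef, hc] at h
        split at h <;> simp_all
      have hu : u ∉ Ve := by
        by_contra hu
        simp [hXdef, hle, hu] at h
      simp [hXdef, hle, Nat.le_succ_of_le hle, hu]
    · intro u τ _ h
      have hle : G.dist v u ≤ τ := by
        by_contra hc
        simp [hXdef, hc] at h
        split at h <;> simp_all
      have hu : u ∈ Ve := by
        by_contra hu
        simp [hXdef, hle, hu] at h
      simp [hXdef, hle, Nat.le_succ_of_le hle, hu]
    · intro u τ _ h
      rw [hinf] at h
      by_cases hle : G.dist v u ≤ τ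
      · exact Or.inl ((hinf u τ).mpr hle)
      · right
        have hd : G.dist v u = τ + 1 := by omega
        simp [hXdef, hle, hd]
    · intro u
      constructor
      · intro h
        by_cases hle : G.dist v u ≤ t
        · by_contra hu
          simp [hXdef, hle, hu] at h
        · simp [hXdef, hle] at h
          split at h <;> simp_all
      · intro hu
        simp [hXdef, hdist_le u hu, hu]
end
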